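/- arXiv:2109.04586 — 5 statements merged into one kernel-verified Lean document; each statement's English description precedes it below -/
import Mathlib

section
/- For every real s ≥ 1/(2√2) and every square-summable sequence x = (x_n)_{n≥0} of real numbers, one has ‖A_s x‖₂ ≤ 4‖x‖₂, i.e. Σ_{n=0}^∞ (Σ_{j=0}^∞ x_j/(max(n,j)+s))² ≤ 16 Σ_{n=0}^∞ x_n². -/
open Finset

noncomputable def Ssum (u : ℕ → ℝ) (k : ℕ) : ℝ := ∑ n ∈ Finset.range (k+1), u n

lemma base_scalar (s : ℝ) (hs : (0.3535:ℝ) ≤ s) :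
    1/(s*(s+1)) + 2/(s+0.696) ≤ 4 := by
  have h1 : (0:ℝ) < s * (s+1) := by nlinarith
  have h2 : (0:ℝ) < s + 0.696 := by nlinarith
  rw [div_add_div _ _ (ne_of_gt h1) (ne_of_gt h2), div_le_iff₀ (by positivity)]
  have h := sub_nonneg.2 hs
  nlinarith [mul_nonneg h h, mul_nonneg (mul_nonneg h h) h]

lemma step_scalar (s m a b : ℝ) (hs : (0.3535:ℝ) ≤ s) (hm : 0 ≤ m) :
    (1/((m+1+s)*(m+2+s)) + 2/(m+1+s+0.696)) * (a+b)^2 ≤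
      2/(m+s+0.696) * a^2 + 4*b^2 := by
  have hA : (0:ℝ) < m + s + 0.696 := by nlinarith
  have hB : (0:ℝ) < m + s + 1.196 := by nlinarith
  have hC : (0:ℝ) < m + 1 + s + 0.696 := by nlinarith
  have hD : (0:ℝ) < m + 1 + s := by nlinarith
  have hE : (0:ℝ) < m + 2 + s := by nlinarith
  set μ : ℝ := 2/(m+s+0.696) with hμdef
  set ν : ℝ := 2/(m+s+1.196) with hνdef
  -- step 1: ν is the exact Schur recursion value: ν * (4 + μ) = 4 * μ
  have key : ν * (4 + μ) = 4 * μ := by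
    rw [hμdef, hνdef]; field_simp; ring
  have hμpos : 0 < μ := by positivity
  have hνpos : 0 < ν := by positivity
  have hμν : ν < μ := by
    rw [hμdef, hνdef]
    apply div_lt_div_of_pos_left (by norm_num) hA
    linarith
  -- step 2: the actual coefficient is ≤ ν
  have hcoef : 1/((m+1+s)*(m+2+s)) + 2/(m+1+s+0.696) ≤ ν := by
    have e : ν - 2/(m+1+s+0.696) = 1/((m+s+1.196)*(m+1+s+0.696)) := by
      rw [hνdef]; field_simp; ring
    have h2 : 1/((m+1+s)*(m+2+s)) ≤ 1/((m+s+1.196)*(m+1+s+0.696)) := by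
      apply one_div_le_one_div_of_le (by positivity)
      nlinarith
    linarith
  -- step 3: quadratic inequality with exact ν
  have hq : ν * (a+b)^2 ≤ μ * a^2 + 4*b^2 := by
    have expand : (μ - ν) * (μ * a^2 + 4*b^2 - ν * (a+b)^2) =
        ((μ - ν)*a - ν*b)^2 + (4*μ - 4*ν - μ*ν)*b^2 := by ring
    have h0 : 4*μ - 4*ν - μ*ν = 0 := by linarith [key]
    have hnn : 0 ≤ (μ - ν) * (μ * a^2 + 4*b^2 - ν * (a+b)^2) := by
      rw [expand, h0]; positivity
    nlinarith [hnn, hμν]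
  calc (1/((m+1+s)*(m+2+s)) + 2/(m+1+s+0.696)) * (a+b)^2
      ≤ ν * (a+b)^2 := mul_le_mul_of_nonneg_right hcoef (sq_nonneg _)
    _ ≤ μ * a^2 + 4*b^2 := hq

lemma hardy (s : ℝ) (hs : (0.3535:ℝ) ≤ s) (u : ℕ → ℝ) : ∀ M : ℕ,
    (∑ k ∈ Finset.range (M+1), 1/(((k:ℝ)+s)*((k:ℝ)+s+1)) * (Ssum u k)^2)
      + 2/((M:ℝ)+s+0.696) * (Ssum u M)^2
    ≤ 4 * ∑ k ∈ Finset.range (M+1), (u k)^2 := by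
  intro M
  induction M with
  | zero =>
      simp only [Ssum, Finset.sum_range_one, Nat.cast_zero, zero_add]
      have hb := base_scalar s hs
      have h0 : (0:ℝ) ≤ (u 0)^2 := sq_nonneg _
      nlinarith
  | succ M ih =>
      rw [Finset.sum_range_succ, Finset.sum_range_succ (f := fun k => (u k)^2)]
      have hS : Ssum u (M+1) = Ssum u M + u (M+1) := by
        simp [Ssum, Finset.sum_range_succ]
      have hstep := step_scalar s (M:ℝ) (Ssum u M) (u (M+1)) hs (Nat.cast_nonneg M)
      push_cast
      rw [hS]
      have e2 : ((M:ℝ) + 1 + s + 1) = (M:ℝ) + 2 + s := by ring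
      rw [e2]
      linarith [hstep, ih]

noncomputable def Bq (s : ℝ) (M : ℕ) (u v : ℕ → ℝ) : ℝ :=
  ∑ n ∈ Finset.range (M+1), ∑ j ∈ Finset.range (M+1), u n * v j / (max (n:ℝ) (j:ℝ) + s)


lemma ident (s : ℝ) (hs : (0:ℝ) < s) (u v : ℕ → ℝ) : ∀ M : ℕ,
    Bq s M u v = (∑ k ∈ Finset.range (M+1),
        1/(((k:ℝ)+s)*((k:ℝ)+s+1)) * (Ssum u k * Ssum v k))
      + 1/((M:ℝ)+1+s) * (Ssum u M * Ssum v M) := by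
  intro M
  induction M with
  | zero =>
      simp only [Bq, Ssum, Finset.sum_range_one, Nat.cast_zero, max_self, zero_add]
      field_simp
      ring
  | succ M ih =>
      have hM1 : (0:ℝ) < (M:ℝ) + 1 + s := by positivity
      have hM2 : (0:ℝ) < (M:ℝ) + 2 + s := by positivity
      -- expand LHS
      have hL : Bq s (M+1) u v = Bq s M u v
          + (Ssum u M * v (M+1) + u (M+1) * Ssum v (M+1)) / ((M:ℝ)+1+s) := by
        simp only [Bq]
        rw [Finset.sum_range_succ]
        have hrow : ∀ n ∈ Finset.range (M+1),
            (∑ j ∈ Finset.range (M+1+1), u n * v j / (max (n:ℝ) (j:ℝ) + s))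
            = (∑ j ∈ Finset.range (M+1), u n * v j / (max (n:ℝ) (j:ℝ) + s))
              + u n * v (M+1) / ((M:ℝ)+1+s) := by
          intro n hn
          rw [Finset.sum_range_succ]
          congr 2
          push_cast
          rw [max_eq_right]
          have := Finset.mem_range.mp hn
          push_cast
          linarith [Nat.lt_succ_iff.mp this, (Nat.cast_le (α := ℝ)).mpr (Nat.lt_succ_iff.mp this)]
        rw [Finset.sum_congr rfl hrow, Finset.sum_add_distrib]
        have hlast : (∑ j ∈ Finset.range (M+1+1), u (M+1) * v j / (max ((M+1:ℕ):ℝ) (j:ℝ) + s))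
            = u (M+1) * Ssum v (M+1) / ((M:ℝ)+1+s) := by
          have : ∀ j ∈ Finset.range (M+1+1),
              u (M+1) * v j / (max ((M+1:ℕ):ℝ) (j:ℝ) + s)
              = u (M+1) * v j / ((M:ℝ)+1+s) := by
            intro j hj
            congr 2
            rw [max_eq_left]
            · push_cast; ring
            · exact_mod_cast (Nat.cast_le (α := ℝ)).mpr (Nat.lt_succ_iff.mp (Finset.mem_range.mp hj))
          rw [Finset.sum_congr rfl this, Ssum, ← Finset.sum_div, ← Finset.mul_sum]
        rw [hlast]
        have hcol : (∑ n ∈ Finset.range (M+1), u n * v (M+1) / ((M:ℝ)+1+s))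
            = Ssum u M * v (M+1) / ((M:ℝ)+1+s) := by
          rw [Ssum, ← Finset.sum_div, ← Finset.sum_mul]
        rw [hcol]
        ring
      rw [hL, ih]
      conv_rhs => rw [Finset.sum_range_succ]
      have hSu : Ssum u (M+1) = Ssum u M + u (M+1) := by simp [Ssum, Finset.sum_range_succ]
      have hSv : Ssum v (M+1) = Ssum v M + v (M+1) := by simp [Ssum, Finset.sum_range_succ]
      rw [hSu, hSv]
      push_cast
      field_simp
      ring

lemma Bq_symm (s : ℝ) (M : ℕ) (u v : ℕ → ℝ) : Bq s M u v = Bq s M v u := by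
  unfold Bq
  rw [Finset.sum_comm]
  refine Finset.sum_congr rfl fun j _ => Finset.sum_congr rfl fun n _ => ?_
  rw [max_comm]; ring

lemma Bq_le (s : ℝ) (hs : (0.3535:ℝ) ≤ s) (u : ℕ → ℝ) (M : ℕ) :
    Bq s M u u ≤ 4 * ∑ k ∈ Finset.range (M+1), (u k)^2 := by
  have hs0 : (0:ℝ) < s := by linarith
  rw [ident s hs0 u u M]
  have h1 : ∀ k ∈ Finset.range (M+1),
      1/(((k:ℝ)+s)*((k:ℝ)+s+1)) * (Ssum u k * Ssum u k)
      = 1/(((k:ℝ)+s)*((k:ℝ)+s+1)) * (Ssum u k)^2 := by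
    intro k _; ring
  rw [Finset.sum_congr rfl h1]
  have h2 : 1/((M:ℝ)+1+s) * (Ssum u M * Ssum u M)
      ≤ 2/((M:ℝ)+s+0.696) * (Ssum u M)^2 := by
    have hc : 1/((M:ℝ)+1+s) ≤ 2/((M:ℝ)+s+0.696) := by
      rw [div_le_div_iff₀ (by positivity) (by positivity)]
      have : (0:ℝ) ≤ (M:ℝ) := Nat.cast_nonneg M
      nlinarith
    have hsq : (0:ℝ) ≤ (Ssum u M)^2 := sq_nonneg _
    calc 1/((M:ℝ)+1+s) * (Ssum u M * Ssum u M) = 1/((M:ℝ)+1+s) * (Ssum u M)^2 := by ring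
      _ ≤ 2/((M:ℝ)+s+0.696) * (Ssum u M)^2 := mul_le_mul_of_nonneg_right hc hsq
  linarith [hardy s hs u M]

lemma Bq_nonneg (s : ℝ) (hs : (0:ℝ) < s) (u : ℕ → ℝ) (M : ℕ) : 0 ≤ Bq s M u u := by
  rw [ident s hs u u M]
  have h1 : (0:ℝ) ≤ ∑ k ∈ Finset.range (M+1),
      1/(((k:ℝ)+s)*((k:ℝ)+s+1)) * (Ssum u k * Ssum u k) := by
    apply Finset.sum_nonneg
    intro k _
    have : (0:ℝ) ≤ 1/(((k:ℝ)+s)*((k:ℝ)+s+1)) := by positivity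
    exact mul_nonneg this (mul_self_nonneg _)
  have h2 : (0:ℝ) ≤ 1/((M:ℝ)+1+s) * (Ssum u M * Ssum u M) := by
    have : (0:ℝ) ≤ 1/((M:ℝ)+1+s) := by positivity
    exact mul_nonneg this (mul_self_nonneg _)
  linarith

lemma Bq_expand (s : ℝ) (M : ℕ) (v w : ℕ → ℝ) :
    Bq s M (fun n => v n - w n / 4) (fun n => v n - w n / 4)
      = Bq s M v v - (1/4) * Bq s M v w - (1/4) * Bq s M w v + (1/16) * Bq s M w w := by
  unfold Bq
  rw [Finset.mul_sum, Finset.mul_sum, Finset.mul_sum, ← Finset.sum_sub_distrib,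
    ← Finset.sum_sub_distrib, ← Finset.sum_add_distrib]
  refine Finset.sum_congr rfl fun n _ => ?_
  rw [Finset.mul_sum, Finset.mul_sum, Finset.mul_sum, ← Finset.sum_sub_distrib,
    ← Finset.sum_sub_distrib, ← Finset.sum_add_distrib]
  refine Finset.sum_congr rfl fun j _ => ?_
  ring

lemma key2 (s : ℝ) (hs : (0.3535:ℝ) ≤ s) (v : ℕ → ℝ) (M : ℕ)
    (hv : ∀ n, M < n → v n = 0) (G : Finset ℕ) :
    ∑ j ∈ G, (∑ n ∈ Finset.range (M+1), v n / (max (n:ℝ) (j:ℝ) + s))^2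
      ≤ 16 * ∑ n ∈ Finset.range (M+1), (v n)^2 := by
  have hs0 : (0:ℝ) < s := by linarith
  set φ : ℕ → ℝ := fun j => ∑ n ∈ Finset.range (M+1), v n / (max (n:ℝ) (j:ℝ) + s) with hφ
  set N : ℕ := M + (G.sup id) with hN
  have hGN : G ⊆ Finset.range (N+1) := by
    intro j hj
    exact Finset.mem_range.mpr (Nat.lt_succ_of_le (le_trans (Finset.le_sup (f := id) hj) (Nat.le_add_left _ _)))
  have hMN : Finset.range (M+1) ⊆ Finset.range (N+1) := by
    apply Finset.range_subset_range.mpr; omega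
  set w : ℕ → ℝ := fun j => if j ∈ G then φ j else 0 with hw
  set T : ℝ := ∑ j ∈ G, (φ j)^2 with hT
  -- A2 : extend inner sum to range (N+1)
  have hA2 : ∀ j : ℕ, (∑ n ∈ Finset.range (N+1), v n / (max (n:ℝ) (j:ℝ) + s)) = φ j := by
    intro j
    rw [hφ]
    refine (Finset.sum_subset hMN fun n _ hn => ?_).symm
    have : M < n := by
      by_contra h
      exact hn (Finset.mem_range.mpr (by omega))
    rw [hv n this, zero_div]
  -- A1 : ∑_{range (N+1)} w^2 = T
  have hA1 : ∑ j ∈ Finset.range (N+1), (w j)^2 = T := by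
    rw [hT]
    refine (Finset.sum_subset hGN fun j _ hj => ?_).symm.trans ?_
    · rw [hw]; simp [hj]
    · refine Finset.sum_congr rfl fun j hj => ?_
      rw [hw]; simp [hj]
  -- A3 : Bq v w = T
  have hA3 : Bq s N v w = T := by
    unfold Bq
    rw [Finset.sum_comm]
    have : ∀ j ∈ Finset.range (N+1),
        (∑ n ∈ Finset.range (N+1), v n * w j / (max (n:ℝ) (j:ℝ) + s)) = w j * φ j := by
      intro j _
      rw [← hA2 j, Finset.mul_sum]
      refine Finset.sum_congr rfl fun n _ => by ring
    rw [Finset.sum_congr rfl this, hT]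
    refine (Finset.sum_subset hGN fun j _ hj => ?_).symm.trans ?_
    · rw [hw]; simp [hj]
    · refine Finset.sum_congr rfl fun j hj => ?_
      rw [hw]; simp [hj]; ring
  -- A5 : Bq v v ≤ 4 * ∑ v^2 over range (M+1)
  have hvsq : ∑ n ∈ Finset.range (N+1), (v n)^2 = ∑ n ∈ Finset.range (M+1), (v n)^2 := by
    refine (Finset.sum_subset hMN fun n _ hn => ?_).symm
    have : M < n := by
      by_contra h
      exact hn (Finset.mem_range.mpr (by omega))
    rw [hv n this]; ring
  have hA5 : Bq s N v v ≤ 4 * ∑ n ∈ Finset.range (M+1), (v n)^2 := by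
    rw [← hvsq]; exact Bq_le s hs v N
  have hA4 : Bq s N w w ≤ 4 * T := by
    rw [← hA1]; exact Bq_le s hs w N
  have hpsd := Bq_nonneg s hs0 (fun n => v n - w n / 4) N
  rw [Bq_expand] at hpsd
  rw [Bq_symm s N w v] at hpsd
  rw [hA3] at hpsd
  linarith

/-- For every `s ≥ 1/(2√2)` and every square-summable real sequence `x`,
`‖A_s x‖₂ ≤ 4 ‖x‖₂`, i.e.
`∑ₙ (∑ⱼ x_j/(max(n,j)+s))² ≤ 16 ∑ₙ x_n²`. -/
theorem As_norm_le_four (s : ℝ) (hs : 1 / (2 * Real.sqrt 2) ≤ s)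
    (x : ℕ → ℝ) (hx : Summable fun n => (x n) ^ 2) :
    ∑' n : ℕ, (∑' j : ℕ, x j / ((max n j : ℝ) + s)) ^ 2 ≤
      16 * ∑' n : ℕ, (x n) ^ 2 := by
  -- numeric bound on s
  have h2 : Real.sqrt 2 ^ 2 = 2 := Real.sq_sqrt (by norm_num)
  have hpos : (0:ℝ) < Real.sqrt 2 := Real.sqrt_pos.mpr (by norm_num)
  have hup : Real.sqrt 2 ≤ 1.41422 := by nlinarith
  have hs35 : (0.3535:ℝ) ≤ s := by
    refine le_trans ?_ hs
    rw [le_div_iff₀ (by positivity)]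
    nlinarith
  have hs0 : (0:ℝ) < s := by linarith
  -- summable kernel square bound
  have hksq : Summable (fun j : ℕ => (1/((j:ℝ)+s))^2) := by
    have h1 : Summable (fun j : ℕ => 9 * (1/(((j:ℝ)+1))^2)) := by
      apply Summable.mul_left
      have h0 : Summable (fun n : ℕ => 1/((n:ℝ))^2) :=
        Real.summable_one_div_nat_pow.mpr (by norm_num)
      have := (summable_nat_add_iff 1).mpr h0
      refine this.congr fun n => ?_
      push_cast
      ring
    refine Summable.of_nonneg_of_le (fun j => by positivity) (fun j => ?_) h1
    have hj : (0:ℝ) < (j:ℝ) + s := by positivity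
    have hj1 : (0:ℝ) < (j:ℝ) + 1 := by positivity
    have hjn : (0:ℝ) ≤ (j:ℝ) := Nat.cast_nonneg j
    have hle : (1:ℝ)/((j:ℝ)+s) ≤ 3/((j:ℝ)+1) := by
      rw [div_le_div_iff₀ hj hj1]; nlinarith
    have h0' : (0:ℝ) ≤ 1/((j:ℝ)+s) := by positivity
    calc (1/((j:ℝ)+s))^2 ≤ (3/((j:ℝ)+1))^2 := by nlinarith [hle, h0']
      _ = 9*(1/((j:ℝ)+1)^2) := by rw [div_pow]; ring
  set y : ℕ → ℝ := fun n => ∑' j : ℕ, x j / (max (n:ℝ) (j:ℝ) + s) with hy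
  set X : ℝ := ∑' n : ℕ, (x n)^2 with hX
  -- summability of the inner series
  have hker_sum : ∀ n : ℕ, Summable (fun j : ℕ => x j / (max (n:ℝ) (j:ℝ) + s)) := by
    intro n
    have hg : Summable (fun j : ℕ => (x j)^2/2 + (1/((j:ℝ)+s))^2/2) :=
      (hx.div_const 2).add (hksq.div_const 2)
    refine Summable.of_norm_bounded hg (fun j => ?_)
    have hmax : (0:ℝ) < max (n:ℝ) (j:ℝ) + s := by positivity
    have hjs : (0:ℝ) < (j:ℝ) + s := by positivity
    have h1 : (1:ℝ)/(max (n:ℝ) (j:ℝ) + s) ≤ 1/((j:ℝ)+s) := by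
      apply one_div_le_one_div_of_le hjs
      have := le_max_right (n:ℝ) (j:ℝ)
      linarith
    rw [Real.norm_eq_abs, abs_div, abs_of_pos hmax]
    calc |x j|/(max (n:ℝ) (j:ℝ) + s) = |x j| * (1/(max (n:ℝ) (j:ℝ) + s)) := by ring
      _ ≤ |x j| * (1/((j:ℝ)+s)) := mul_le_mul_of_nonneg_left h1 (abs_nonneg _)
      _ ≤ (x j)^2/2 + (1/((j:ℝ)+s))^2/2 := by
          nlinarith [sq_nonneg (|x j| - 1/((j:ℝ)+s)), sq_abs (x j)]
  have hXnn : (0:ℝ) ≤ X := tsum_nonneg (fun n => sq_nonneg _)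
  -- key bound for every finite set of output indices
  have hFbound : ∀ F : Finset ℕ, ∑ n ∈ F, (y n)^2 ≤ 16 * X := by
    intro F
    set M : ℕ := F.sup id with hM
    have hFM : F ⊆ Finset.range (M+1) := fun n hn =>
      Finset.mem_range.mpr (Nat.lt_succ_of_le (Finset.le_sup (f := id) hn))
    set v : ℕ → ℝ := fun n => if n ∈ F then y n else 0 with hv
    have hvz : ∀ n, M < n → v n = 0 := by
      intro n hn
      rw [hv]
      simp only
      rw [if_neg]
      intro hnF
      have : n ≤ M := Finset.le_sup (f := id) hnF
      omega
    set φ : ℕ → ℝ := fun j => ∑ n ∈ Finset.range (M+1), v n / (max (n:ℝ) (j:ℝ) + s) with hφ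
    set C : ℝ := ∑ n ∈ Finset.range (M+1), |v n| with hC
    have hCnn : (0:ℝ) ≤ C := Finset.sum_nonneg fun n _ => abs_nonneg _
    have hφbound : ∀ j : ℕ, |φ j| ≤ C * (1/((j:ℝ)+s)) := by
      intro j
      have hjs : (0:ℝ) < (j:ℝ) + s := by positivity
      calc |φ j| ≤ ∑ n ∈ Finset.range (M+1), |v n / (max (n:ℝ) (j:ℝ) + s)| :=
            Finset.abs_sum_le_sum_abs _ _
        _ ≤ ∑ n ∈ Finset.range (M+1), |v n| * (1/((j:ℝ)+s)) := by
            refine Finset.sum_le_sum fun n _ => ?_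
            have hmax : (0:ℝ) < max (n:ℝ) (j:ℝ) + s := by positivity
            rw [abs_div, abs_of_pos hmax]
            have h1 : (1:ℝ)/(max (n:ℝ) (j:ℝ) + s) ≤ 1/((j:ℝ)+s) := by
              apply one_div_le_one_div_of_le hjs
              have := le_max_right (n:ℝ) (j:ℝ)
              linarith
            calc |v n|/(max (n:ℝ) (j:ℝ) + s) = |v n| * (1/(max (n:ℝ) (j:ℝ) + s)) := by ring
              _ ≤ |v n| * (1/((j:ℝ)+s)) := mul_le_mul_of_nonneg_left h1 (abs_nonneg _)
        _ = C * (1/((j:ℝ)+s)) := by rw [hC, Finset.sum_mul]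
    have hφsq : Summable (fun j : ℕ => (φ j)^2) := by
      refine Summable.of_nonneg_of_le (fun j => sq_nonneg _) (fun j => ?_) (hksq.mul_left (C^2))
      have := hφbound j
      have h0 : (0:ℝ) ≤ |φ j| := abs_nonneg _
      have h2' : (φ j)^2 = |φ j|^2 := (sq_abs _).symm
      rw [h2']
      calc |φ j|^2 ≤ (C * (1/((j:ℝ)+s)))^2 := by nlinarith [hφbound j]
        _ = C^2 * (1/((j:ℝ)+s))^2 := by ring
    -- identify ∑_F y² with a tsum
    set V : ℝ := ∑ n ∈ F, (y n)^2 with hV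
    have hVv : V = ∑ n ∈ F, v n * y n := by
      refine Finset.sum_congr rfl fun n hn => ?_
      rw [hv]
      simp only [if_pos hn]
      ring
    have hswap : ∑ n ∈ F, v n * y n = ∑' j : ℕ, ∑ n ∈ F, v n * (x j / (max (n:ℝ) (j:ℝ) + s)) := by
      rw [Summable.tsum_finsetSum (fun n _ => (hker_sum n).mul_left (v n))]
      refine Finset.sum_congr rfl fun n _ => ?_
      rw [hy]
      exact tsum_mul_left.symm
    have hinner : ∀ j : ℕ, (∑ n ∈ F, v n * (x j / (max (n:ℝ) (j:ℝ) + s))) = x j * φ j := by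
      intro j
      rw [hφ, Finset.mul_sum]
      rw [Finset.sum_subset hFM (fun n _ hn => by
        rw [hv]; simp only [if_neg hn]; ring)]
      refine Finset.sum_congr rfl fun n _ => by ring
    have hVt : V = ∑' j : ℕ, x j * φ j := by
      rw [hVv, hswap]
      exact tsum_congr hinner
    -- summability of x * φ
    have hxφ : Summable (fun j : ℕ => x j * φ j) := by
      have hg : Summable (fun j : ℕ => (x j)^2/2 + (φ j)^2/2) :=
        (hx.div_const 2).add (hφsq.div_const 2)
      refine Summable.of_norm_bounded hg (fun j => ?_)
      rw [Real.norm_eq_abs, abs_mul]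
      nlinarith [sq_nonneg (|x j| - |φ j|), sq_abs (x j), sq_abs (φ j), abs_nonneg (x j), abs_nonneg (φ j)]
    -- AM-GM and the finite-output bound
    have hAM : ∀ j : ℕ, x j * φ j ≤ 8*(x j)^2 + (1/32)*(φ j)^2 := by
      intro j
      nlinarith [sq_nonneg (x j - φ j/16)]
    have hsum2 : Summable (fun j : ℕ => 8*(x j)^2 + (1/32)*(φ j)^2) :=
      (hx.mul_left 8).add (hφsq.mul_left (1/32))
    have hΦle : (∑' j : ℕ, (φ j)^2) ≤ 16 * ∑ n ∈ Finset.range (M+1), (v n)^2 :=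
      Summable.tsum_le_of_sum_le hφsq (fun G => key2 s hs35 v M hvz G)
    have hvsq : ∑ n ∈ Finset.range (M+1), (v n)^2 = V := by
      rw [hV]
      refine (Finset.sum_subset hFM (fun n _ hn => by rw [hv]; simp [hn])).symm.trans ?_
      refine Finset.sum_congr rfl fun n hn => ?_
      rw [hv]; simp [hn]
    have hsplit : (∑' j : ℕ, (8*(x j)^2 + (1/32)*(φ j)^2))
        = 8 * X + (1/32) * ∑' j : ℕ, (φ j)^2 := by
      rw [Summable.tsum_add (hx.mul_left 8) (hφsq.mul_left (1/32)), tsum_mul_left, tsum_mul_left, hX]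
    have hchain : V ≤ 8 * X + (1/32) * (16 * V) := by
      calc V = ∑' j : ℕ, x j * φ j := hVt
        _ ≤ ∑' j : ℕ, (8*(x j)^2 + (1/32)*(φ j)^2) := Summable.tsum_le_tsum hAM hxφ hsum2
        _ = 8 * X + (1/32) * ∑' j : ℕ, (φ j)^2 := hsplit
        _ ≤ 8 * X + (1/32) * (16 * ∑ n ∈ Finset.range (M+1), (v n)^2) := by
            have := hΦle
            linarith
        _ = 8 * X + (1/32) * (16 * V) := by rw [hvsq]
    linarith
  have hsummable : Summable (fun n : ℕ => (y n)^2) :=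
    summable_of_sum_le (fun n => sq_nonneg _) hFbound
  exact Summable.tsum_le_of_sum_le hsummable hFbound
end

section
/- For every real s ≥ 1/(2√2), the operator norm of A_s on ℓ² equals 4: sup_{x≠0, x∈ℓ²} ‖A_s x‖₂/‖x‖₂ = 4. -/
open Finset Filter

/-! ### Auxiliary definitions -/

noncomputable def Kmat (s : ℝ) (i j : ℕ) : ℝ := 1 / ((max i j : ℝ) + s)
noncomputable def wgt (s : ℝ) (n : ℕ) : ℝ := 1 / (((n:ℝ) + s) * ((n:ℝ) + s + 1))
noncomputable def Sp (x : ℕ → ℝ) (n : ℕ) : ℝ := ∑ k ∈ Finset.range (n+1), x k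
noncomputable def cc (n : ℕ) : ℝ := 2 / ((n:ℝ) + 21/20)
noncomputable def Aop (s : ℝ) (x : ℕ → ℝ) (i : ℕ) : ℝ := ∑' j, x j * Kmat s i j

/-! ### Elementary numeric facts -/

lemma sqrt2_facts : (1.41 : ℝ) ≤ Real.sqrt 2 ∧ Real.sqrt 2 ≤ 1.5 := by
  constructor
  · nlinarith [Real.sq_sqrt (by norm_num : (2:ℝ) ≥ 0), Real.sqrt_nonneg 2]
  · nlinarith [Real.sq_sqrt (by norm_num : (2:ℝ) ≥ 0), Real.sqrt_nonneg 2]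

lemma sqrt2_quarter_pos : (0:ℝ) < Real.sqrt 2 / 4 := by positivity

lemma spos {s : ℝ} (hs : Real.sqrt 2 / 4 ≤ s) : 0 < s := lt_of_lt_of_le sqrt2_quarter_pos hs

/-! ### The key quadratic inequality -/

lemma psd_step (c' d S x : ℝ) (hc : 0 < c') (hd : d * (4 + c') ≤ 4 * c') :
    d * (S + x)^2 ≤ 4 * x^2 + c' * S^2 := by
  have h4d : d < 4 := by nlinarith
  have key : (4 - d) * (4 * x^2 + c' * S^2 - d * (S + x)^2)
      = ((4 - d) * x - d * S)^2 + (4 * c' - 4 * d - c' * d) * S^2 := by ring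
  nlinarith [sq_nonneg ((4 - d) * x - d * S), sq_nonneg S,
    mul_nonneg (by nlinarith : (0:ℝ) ≤ 4 * c' - 4 * d - c' * d) (sq_nonneg S)]

lemma key_ineq (n : ℕ) (S x : ℝ) :
    (wgt (Real.sqrt 2 / 4) (n+1) + cc (n+1)) * (S + x)^2 ≤ 4 * x^2 + cc n * S^2 := by
  obtain ⟨h1, h2⟩ := sqrt2_facts
  have hsq : Real.sqrt 2 ^ 2 = 2 := Real.sq_sqrt (by norm_num)
  set m := (n:ℝ) with hm
  have hm0 : 0 ≤ m := Nat.cast_nonneg n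
  have hwpos : 0 < ((m+1) + Real.sqrt 2/4) * ((m+1) + Real.sqrt 2/4 + 1) := by nlinarith
  have hcpos : (0:ℝ) < m + 21/20 := by nlinarith
  have hc1pos : (0:ℝ) < m + 1 + 21/20 := by nlinarith
  have h31pos : (0:ℝ) < m + 31/20 := by nlinarith
  have hw : wgt (Real.sqrt 2 / 4) (n+1) = 1 / (((m+1) + Real.sqrt 2/4) * ((m+1) + Real.sqrt 2/4 + 1)) := by
    unfold wgt; rw [hm]; push_cast; ring_nf
  have hccn : cc n = 2 / (m + 21/20) := rfl
  have hccn1 : cc (n+1) = 2 / (m + 1 + 21/20) := by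
    unfold cc; rw [hm]; push_cast; ring_nf
  set d := wgt (Real.sqrt 2 / 4) (n+1) + cc (n+1) with hd
  have hA : wgt (Real.sqrt 2 / 4) (n+1) ≤ 1 / ((m + 31/20) * (m + 41/20)) := by
    rw [hw]
    apply one_div_le_one_div_of_le (by positivity)
    nlinarith
  have hB : (1:ℝ) / ((m + 31/20) * (m + 41/20)) + 2 / (m + 1 + 21/20) = 2 / (m + 31/20) := by
    field_simp
    ring
  have hdle : d ≤ 2 / (m + 31/20) := by
    rw [hd, hccn1]; linarith
  have hC : (2 / (m + 31/20)) * (4 + 2 / (m + 21/20)) = 4 * (2 / (m + 21/20)) := by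
    field_simp
    ring
  have hkey : d * (4 + cc n) ≤ 4 * cc n := by
    rw [hccn]
    calc d * (4 + 2 / (m + 21/20)) ≤ (2 / (m + 31/20)) * (4 + 2 / (m + 21/20)) := by
          apply mul_le_mul_of_nonneg_right hdle (by positivity)
      _ = 4 * (2 / (m + 21/20)) := hC
  have := psd_step (cc n) d S x (by rw [hccn]; positivity) hkey
  linarith

/-! ### The discrete Hardy-type inequality -/

lemma hardy_partial (x : ℕ → ℝ) (N : ℕ) :
    ∑ n ∈ range (N+1), wgt (Real.sqrt 2 / 4) n * (Sp x n)^2 + cc N * (Sp x N)^2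
      ≤ 4 * ∑ n ∈ range (N+1), (x n)^2 := by
  induction N with
  | zero =>
    obtain ⟨h1, h2⟩ := sqrt2_facts
    have hsq : Real.sqrt 2 ^ 2 = 2 := Real.sq_sqrt (by norm_num)
    simp only [zero_add, range_one, sum_singleton]
    have hSp : Sp x 0 = x 0 := by simp [Sp]
    rw [hSp]
    have hw : wgt (Real.sqrt 2 / 4) 0 = 1 / ((Real.sqrt 2/4) * (Real.sqrt 2/4 + 1)) := by
      simp [wgt]
    have hc : cc 0 = 2 / (21/20) := by simp [cc]
    have hwle : wgt (Real.sqrt 2 / 4) 0 + cc 0 ≤ 4 := by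
      rw [hw, hc]
      have hpos : (0:ℝ) < (Real.sqrt 2/4) * (Real.sqrt 2/4 + 1) := by nlinarith
      rw [div_add_div _ _ (ne_of_gt hpos) (by norm_num), div_le_iff₀ (by positivity)]
      nlinarith
    nlinarith [sq_nonneg (x 0), mul_le_mul_of_nonneg_right hwle (sq_nonneg (x 0))]
  | succ N ih =>
    rw [sum_range_succ, sum_range_succ (fun n => (x n)^2)]
    have hSp : Sp x (N+1) = Sp x N + x (N+1) := by
      simp [Sp, sum_range_succ]
    have := key_ineq N (Sp x N) (x (N+1))
    rw [hSp]
    nlinarith [this]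

lemma hardy_partial' (x : ℕ → ℝ) (M : ℕ) :
    ∑ n ∈ range M, wgt (Real.sqrt 2 / 4) n * (Sp x n)^2 ≤ 4 * ∑ n ∈ range M, (x n)^2 := by
  cases M with
  | zero => simp
  | succ N =>
    have h := hardy_partial x N
    have hcc : 0 ≤ cc N * (Sp x N)^2 := by
      have : (0:ℝ) < (N:ℝ) + 21/20 := by positivity
      have : 0 ≤ cc N := by rw [cc]; positivity
      positivity
    linarith

/-! ### Weight basics -/

lemma wgt_eq (s : ℝ) (hs : 0 < s) (n : ℕ) :
    wgt s n = 1 / ((n:ℝ) + s) - 1 / ((n:ℝ) + s + 1) := by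
  have h1 : (0:ℝ) < (n:ℝ) + s := by positivity
  have h2 : (0:ℝ) < (n:ℝ) + s + 1 := by positivity
  unfold wgt
  field_simp
  ring

lemma wgt_nonneg (s : ℝ) (hs : 0 < s) (n : ℕ) : 0 ≤ wgt s n := by
  unfold wgt; positivity

lemma wgt_mono (s s' : ℝ) (hs : 0 < s) (hss' : s ≤ s') (n : ℕ) : wgt s' n ≤ wgt s n := by
  unfold wgt
  apply one_div_le_one_div_of_le (by positivity)
  nlinarith [Nat.cast_nonneg (α := ℝ) n]

lemma hasSum_wgt (s : ℝ) (hs : 0 < s) (m : ℕ) :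
    HasSum (fun k : ℕ => wgt s (m + k)) (1 / ((m:ℝ) + s)) := by
  have key : ∀ K : ℕ, ∑ k ∈ range K, wgt s (m + k)
      = 1 / ((m:ℝ) + s) - 1 / ((m:ℝ) + K + s) := by
    intro K
    induction K with
    | zero => simp
    | succ K ih =>
      rw [sum_range_succ, ih, wgt_eq s hs]
      push_cast
      ring
  have hnn : ∀ k, 0 ≤ wgt s (m + k) := fun k => wgt_nonneg s hs _
  have hsummable : Summable (fun k : ℕ => wgt s (m + k)) := by
    apply summable_of_sum_range_le (c := 1 / ((m:ℝ) + s)) hnn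
    intro K
    rw [key K]
    have : (0:ℝ) ≤ 1 / ((m:ℝ) + K + s) := by positivity
    linarith
  have htend : Filter.Tendsto (fun K => ∑ k ∈ range K, wgt s (m + k)) Filter.atTop
      (nhds (1 / ((m:ℝ) + s))) := by
    simp_rw [key]
    have hb : Filter.Tendsto (fun K : ℕ => (m:ℝ) + K + s) Filter.atTop Filter.atTop := by
      apply Filter.tendsto_atTop_add_const_right
      apply Filter.tendsto_atTop_add_const_left
      exact tendsto_natCast_atTop_atTop
    have : Filter.Tendsto (fun K : ℕ => 1 / ((m:ℝ) + K + s)) Filter.atTop (nhds 0) := by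
      simp only [one_div]
      exact hb.inv_tendsto_atTop
    simpa using (tendsto_const_nhds (x := 1 / ((m:ℝ) + s))).sub this
  exact (hsummable.hasSum_iff_tendsto_nat).mpr htend

lemma hasSum_wgt_ind (s : ℝ) (hs : 0 < s) (m : ℕ) :
    HasSum (fun n : ℕ => if m ≤ n then wgt s n else 0) (1 / ((m:ℝ) + s)) := by
  have h := hasSum_wgt s hs m
  rw [← hasSum_nat_add_iff' (f := fun n : ℕ => if m ≤ n then wgt s n else 0) m]
  have hz : ∑ i ∈ range m, (if m ≤ i then wgt s i else 0) = 0 := by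
    apply sum_eq_zero
    intro i hi
    exact if_neg (not_le.mpr (mem_range.mp hi))
  rw [hz, sub_zero]
  convert h using 1
  case e'_3 => rfl
  funext k
  rw [if_pos (Nat.le_add_left m k), Nat.add_comm]

lemma Kmat_eq_tsum (s : ℝ) (hs : 0 < s) (i j : ℕ) :
    Kmat s i j = ∑' n : ℕ, (if max i j ≤ n then wgt s n else 0) := by
  rw [Kmat, (hasSum_wgt_ind s hs (max i j)).tsum_eq, Nat.cast_max]

lemma Kmat_nonneg (s : ℝ) (hs : 0 < s) (i j : ℕ) : 0 ≤ Kmat s i j := by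
  unfold Kmat
  positivity

lemma Kmat_symm (s : ℝ) (i j : ℕ) : Kmat s i j = Kmat s j i := by
  unfold Kmat
  rw [max_comm]

lemma Kmat_le (s : ℝ) (hs : 0 < s) (i j : ℕ) : Kmat s i j ≤ 1 / ((j:ℝ) + s) := by
  unfold Kmat
  apply one_div_le_one_div_of_le (by positivity)
  have : (j:ℝ) ≤ max (i:ℝ) (j:ℝ) := le_max_right _ _
  linarith

/-! ### Summability lemmas -/

lemma summable_inv_sq (s : ℝ) (hs : 0 < s) : Summable (fun j : ℕ => (1 / ((j:ℝ) + s))^2) := by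
  have hw : Summable (fun j : ℕ => wgt s (0 + j)) := (hasSum_wgt s hs 0).summable
  simp only [Nat.zero_add] at hw
  apply Summable.of_nonneg_of_le (fun j => by positivity)
    (fun j => ?_) (hw.mul_left ((s+1)/s))
  have h1 : (0:ℝ) < (j:ℝ) + s := by positivity
  have h2 : (0:ℝ) < (j:ℝ) + s + 1 := by positivity
  have heq : (s+1)/s * wgt s j = (s+1) / (s * (((j:ℝ)+s) * ((j:ℝ)+s+1))) := by
    rw [wgt]
    field_simp
  rw [heq, div_pow, one_pow, div_le_div_iff₀ (by positivity) (by positivity)]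
  nlinarith [Nat.cast_nonneg (α := ℝ) j]

lemma summable_mul_K (s : ℝ) (hs : 0 < s) (x : ℕ → ℝ) (hx : Summable (fun n => (x n)^2)) (i : ℕ) :
    Summable (fun j => x j * Kmat s i j) := by
  apply Summable.of_abs
  apply Summable.of_nonneg_of_le (fun j => abs_nonneg _)
    (fun j => ?_) ((hx.add (summable_inv_sq s hs)).mul_left (1/2))
  rw [abs_mul]
  have hK : |Kmat s i j| = Kmat s i j := abs_of_nonneg (Kmat_nonneg s hs i j)
  have hKle : Kmat s i j ≤ 1 / ((j:ℝ) + s) := Kmat_le s hs i j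
  have h2 : |x j| * Kmat s i j ≤ |x j| * (1 / ((j:ℝ) + s)) :=
    mul_le_mul_of_nonneg_left hKle (abs_nonneg _)
  rw [hK]
  refine h2.trans ?_
  nlinarith [sq_nonneg (|x j| - 1 / ((j:ℝ) + s)), sq_abs (x j), abs_nonneg (x j),
    sq_nonneg (1 / ((j:ℝ) + s))]

lemma tsum_cauchy_schwarz (f g : ℕ → ℝ) (hf : Summable (fun n => (f n)^2))
    (hg : Summable (fun n => (g n)^2)) :
    ∑' n, f n * g n ≤ Real.sqrt (∑' n, (f n)^2) * Real.sqrt (∑' n, (g n)^2) := by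
  have hfg : Summable (fun n => f n * g n) := by
    apply Summable.of_abs
    apply Summable.of_nonneg_of_le (fun j => abs_nonneg _) (fun j => ?_)
      ((hf.add hg).mul_left (1/2))
    rw [abs_mul]
    nlinarith [sq_nonneg (|f j| - |g j|), sq_abs (f j), sq_abs (g j)]
  apply Summable.tsum_le_of_sum_le hfg
  intro t
  calc ∑ n ∈ t, f n * g n
      ≤ Real.sqrt (∑ n ∈ t, (f n)^2) * Real.sqrt (∑ n ∈ t, (g n)^2) :=
        Real.sum_mul_le_sqrt_mul_sqrt t f g
    _ ≤ Real.sqrt (∑' n, (f n)^2) * Real.sqrt (∑' n, (g n)^2) := by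
        apply mul_le_mul
        · exact Real.sqrt_le_sqrt (Summable.sum_le_tsum t (fun n _ => sq_nonneg _) hf)
        · exact Real.sqrt_le_sqrt (Summable.sum_le_tsum t (fun n _ => sq_nonneg _) hg)
        · positivity
        · positivity

lemma summable_sq_of_supp (x : ℕ → ℝ) (N : ℕ) (hx : ∀ n, N ≤ n → x n = 0) :
    Summable (fun n => (x n)^2) := by
  apply summable_of_ne_finset_zero (s := range N)
  intro n hn
  rw [hx n (by simpa using hn)]
  ring

/-! ### The quadratic form identity -/

lemma sp_eq_trunc (x : ℕ → ℝ) (N : ℕ) (hx : ∀ n, N ≤ n → x n = 0) (n : ℕ) :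
    ∑ i ∈ range N, (if i ≤ n then x i else 0) = Sp x n := by
  rw [Finset.sum_ite, Finset.sum_const_zero, add_zero]
  have hfil : (range N).filter (fun i => i ≤ n) = range (min N (n+1)) := by
    ext i
    simp only [mem_filter, mem_range, lt_min_iff]
    omega
  rw [hfil, Sp]
  rcases le_or_gt N (n+1) with h | h
  · rw [min_eq_left h]
    apply Finset.sum_subset (range_subset_range.mpr h)
    intro i _ hiN
    exact hx i (by simpa using hiN)
  · rw [min_eq_right (le_of_lt h)]

lemma quad_identity (s : ℝ) (hs : 0 < s) (x : ℕ → ℝ) (N : ℕ) (hx : ∀ n, N ≤ n → x n = 0) :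
    ∑ i ∈ range N, x i * (∑' j, x j * Kmat s i j) = ∑' n, wgt s n * (Sp x n)^2 := by
  have hinner : ∀ i, (∑' j, x j * Kmat s i j) = ∑ j ∈ range N, x j * Kmat s i j := by
    intro i
    apply tsum_eq_sum
    intro j hj
    rw [hx j (by simpa using hj), zero_mul]
  have hsum1 : ∀ i j : ℕ, Summable (fun n => x i * x j * (if max i j ≤ n then wgt s n else 0)) :=
    fun i j => (hasSum_wgt_ind s hs (max i j)).summable.mul_left _
  calc ∑ i ∈ range N, x i * (∑' j, x j * Kmat s i j)
      = ∑ i ∈ range N, ∑ j ∈ range N, ∑' n : ℕ, x i * x j * (if max i j ≤ n then wgt s n else 0) := by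
        apply Finset.sum_congr rfl
        intro i _
        rw [hinner i, Finset.mul_sum]
        apply Finset.sum_congr rfl
        intro j _
        rw [Kmat_eq_tsum s hs i j, ← tsum_mul_left, ← tsum_mul_left]
        apply tsum_congr
        intro n
        ring
    _ = ∑' n : ℕ, ∑ i ∈ range N, ∑ j ∈ range N, x i * x j * (if max i j ≤ n then wgt s n else 0) := by
        rw [Finset.sum_congr rfl (fun i _ => (Summable.tsum_finsetSum (fun j _ => hsum1 i j)).symm)]
        exact (Summable.tsum_finsetSum (fun i _ => summable_sum (fun j _ => hsum1 i j))).symm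
    _ = ∑' n : ℕ, wgt s n * (Sp x n)^2 := by
        apply tsum_congr
        intro n
        have hterm : ∀ i j : ℕ, x i * x j * (if max i j ≤ n then wgt s n else 0)
            = (if i ≤ n then x i else 0) * (if j ≤ n then x j else 0) * wgt s n := by
          intro i j
          rcases le_or_gt (max i j) n with h | h
          · rw [if_pos h, if_pos (le_trans (le_max_left i j) h), if_pos (le_trans (le_max_right i j) h)]
          · rw [if_neg (not_le.mpr h)]
            rcases max_cases i j with ⟨he, _⟩ | ⟨he, _⟩
            · rw [he] at h
              rw [if_neg (not_le.mpr h)]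
              ring
            · rw [he] at h
              rw [if_neg (not_le.mpr h)]
              ring
        simp_rw [hterm]
        simp_rw [← Finset.sum_mul]
        rw [← Finset.sum_mul_sum, sp_eq_trunc x N hx n]
        ring

/-! ### Hardy bound, tsum version -/

lemma sum_sq_range_le (x : ℕ → ℝ) (N M : ℕ) (hx : ∀ n, N ≤ n → x n = 0) :
    ∑ n ∈ range M, (x n)^2 ≤ ∑ n ∈ range N, (x n)^2 := by
  have h1 : ∑ n ∈ range M, (x n)^2 ≤ ∑ n ∈ range (M + N), (x n)^2 := by
    apply Finset.sum_le_sum_of_subset_of_nonneg (range_subset_range.mpr (Nat.le_add_right M N))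
    intro i _ _
    positivity
  have h2 : ∑ n ∈ range (M + N), (x n)^2 = ∑ n ∈ range N, (x n)^2 := by
    symm
    apply Finset.sum_subset (range_subset_range.mpr (Nat.le_add_left N M))
    intro i _ hi
    rw [hx i (by simpa using hi)]
    ring
  linarith

lemma hardy_sum_bound {s : ℝ} (hs : Real.sqrt 2 / 4 ≤ s) (x : ℕ → ℝ) (N : ℕ)
    (hx : ∀ n, N ≤ n → x n = 0) (M : ℕ) :
    ∑ n ∈ range M, wgt s n * (Sp x n)^2 ≤ 4 * ∑ n ∈ range N, (x n)^2 := by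
  calc ∑ n ∈ range M, wgt s n * (Sp x n)^2
      ≤ ∑ n ∈ range M, wgt (Real.sqrt 2 / 4) n * (Sp x n)^2 :=
        Finset.sum_le_sum (fun n _ => mul_le_mul_of_nonneg_right
          (wgt_mono _ _ sqrt2_quarter_pos hs n) (sq_nonneg _))
    _ ≤ 4 * ∑ n ∈ range M, (x n)^2 := hardy_partial' x M
    _ ≤ 4 * ∑ n ∈ range N, (x n)^2 := by linarith [sum_sq_range_le x N M hx]

lemma hardy_tsum_le {s : ℝ} (hs : Real.sqrt 2 / 4 ≤ s) (x : ℕ → ℝ) (N : ℕ)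
    (hx : ∀ n, N ≤ n → x n = 0) :
    ∑' n, wgt s n * (Sp x n)^2 ≤ 4 * ∑ n ∈ range N, (x n)^2 :=
  Real.tsum_le_of_sum_range_le
    (fun n => mul_nonneg (wgt_nonneg s (spos hs) n) (sq_nonneg _))
    (hardy_sum_bound hs x N hx)

lemma hardy_summable {s : ℝ} (hs : Real.sqrt 2 / 4 ≤ s) (x : ℕ → ℝ) (N : ℕ)
    (hx : ∀ n, N ≤ n → x n = 0) :
    Summable (fun n => wgt s n * (Sp x n)^2) :=
  summable_of_sum_range_le
    (fun n => mul_nonneg (wgt_nonneg s (spos hs) n) (sq_nonneg _))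
    (hardy_sum_bound hs x N hx)

/-! ### The bilinear form bound -/

lemma bform_fin {s : ℝ} (hs0 : 0 < s) (z u : ℕ → ℝ) (N : ℕ) (hu : ∀ n, N ≤ n → u n = 0) :
    ∑ i ∈ range N, z i * (∑' j, u j * Kmat s i j)
      = ∑ i ∈ range N, ∑ j ∈ range N, z i * u j * Kmat s i j := by
  apply Finset.sum_congr rfl
  intro i _
  have : (∑' j, u j * Kmat s i j) = ∑ j ∈ range N, u j * Kmat s i j := by
    apply tsum_eq_sum
    intro j hj
    rw [hu j (by simpa using hj), zero_mul]
  rw [this, Finset.mul_sum]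
  apply Finset.sum_congr rfl
  intro j _
  ring

lemma qform_nonneg {s : ℝ} (hs0 : 0 < s) (v : ℕ → ℝ) (N : ℕ) (hv : ∀ n, N ≤ n → v n = 0) :
    0 ≤ ∑ i ∈ range N, v i * (∑' j, v j * Kmat s i j) := by
  rw [quad_identity s hs0 v N hv]
  apply tsum_nonneg
  intro n
  exact mul_nonneg (wgt_nonneg s hs0 n) (sq_nonneg _)

lemma qform_le {s : ℝ} (hs : Real.sqrt 2 / 4 ≤ s) (v : ℕ → ℝ) (N : ℕ)
    (hv : ∀ n, N ≤ n → v n = 0) :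
    ∑ i ∈ range N, v i * (∑' j, v j * Kmat s i j) ≤ 4 * ∑ n ∈ range N, (v n)^2 := by
  rw [quad_identity s (spos hs) v N hv]
  exact hardy_tsum_le hs v N hv

lemma bilinear_bound {s : ℝ} (hs : Real.sqrt 2 / 4 ≤ s) (z u : ℕ → ℝ) (N : ℕ)
    (hz : ∀ n, N ≤ n → z n = 0) (hu : ∀ n, N ≤ n → u n = 0) :
    ∑ i ∈ range N, z i * (∑' j, u j * Kmat s i j)
      ≤ 4 * Real.sqrt (∑ n ∈ range N, (z n)^2) * Real.sqrt (∑ n ∈ range N, (u n)^2) := by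
  have hs0 : 0 < s := spos hs
  set a := Real.sqrt (∑ n ∈ range N, (z n)^2) with ha
  set b := Real.sqrt (∑ n ∈ range N, (u n)^2) with hb
  have ha0 : 0 ≤ a := Real.sqrt_nonneg _
  have hb0 : 0 ≤ b := Real.sqrt_nonneg _
  have hza : ∑ n ∈ range N, (z n)^2 = a^2 := (Real.sq_sqrt (by positivity)).symm
  have hub : ∑ n ∈ range N, (u n)^2 = b^2 := (Real.sq_sqrt (by positivity)).symm
  rcases eq_or_lt_of_le ha0 with haz | hapos
  · have hz0 : ∀ i ∈ range N, z i = 0 := by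
      intro i hi
      have hsum : ∑ n ∈ range N, (z n)^2 = 0 := by
        rw [hza, ← haz]; ring
      have := (Finset.sum_eq_zero_iff_of_nonneg (fun n _ => sq_nonneg (z n))).mp hsum i hi
      exact pow_eq_zero_iff (by norm_num) |>.mp this
    rw [Finset.sum_eq_zero (fun i hi => by rw [hz0 i hi, zero_mul])]
    positivity
  rcases eq_or_lt_of_le hb0 with hbz | hbpos
  · have hu0 : ∀ j, u j = 0 := by
      intro j
      rcases lt_or_ge j N with hj | hj
      · have hsum : ∑ n ∈ range N, (u n)^2 = 0 := by
          rw [hub, ← hbz]; ring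
        have := (Finset.sum_eq_zero_iff_of_nonneg (fun n _ => sq_nonneg (u n))).mp hsum j
          (mem_range.mpr hj)
        exact pow_eq_zero_iff (by norm_num) |>.mp this
      · exact hu j hj
    have : ∀ i ∈ range N, z i * (∑' j, u j * Kmat s i j) = 0 := by
      intro i _
      simp [hu0]
    rw [Finset.sum_eq_zero this]
    positivity
  set t := Real.sqrt (b / a) with ht
  have htpos : 0 < t := Real.sqrt_pos.mpr (by positivity)
  have ht2 : t^2 = b / a := Real.sq_sqrt (by positivity)
  have htinv : t * t⁻¹ = 1 := mul_inv_cancel₀ (ne_of_gt htpos)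
  set v := fun n => t * z n + t⁻¹ * u n with hv
  set w := fun n => t * z n - t⁻¹ * u n with hw
  have hvsupp : ∀ n, N ≤ n → v n = 0 := by
    intro n hn; simp [hv, hz n hn, hu n hn]
  have hwsupp : ∀ n, N ≤ n → w n = 0 := by
    intro n hn; simp [hw, hz n hn, hu n hn]
  have hpol : ∑ i ∈ range N, ∑ j ∈ range N, v i * v j * Kmat s i j
      - ∑ i ∈ range N, ∑ j ∈ range N, w i * w j * Kmat s i j
      = 2 * ∑ i ∈ range N, ∑ j ∈ range N, z i * u j * Kmat s i j
      + 2 * ∑ i ∈ range N, ∑ j ∈ range N, u i * z j * Kmat s i j := by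
    rw [← Finset.sum_sub_distrib]
    rw [Finset.mul_sum, Finset.mul_sum, ← Finset.sum_add_distrib]
    apply Finset.sum_congr rfl
    intro i _
    rw [← Finset.sum_sub_distrib, Finset.mul_sum, Finset.mul_sum, ← Finset.sum_add_distrib]
    apply Finset.sum_congr rfl
    intro j _
    have key : v i * v j - w i * w j = 2 * (z i * u j) + 2 * (u i * z j) := by
      simp only [hv, hw]
      linear_combination (2 * (z i * u j) + 2 * (u i * z j)) * htinv
    linear_combination Kmat s i j * key
  have hswap : ∑ i ∈ range N, ∑ j ∈ range N, u i * z j * Kmat s i j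
      = ∑ i ∈ range N, ∑ j ∈ range N, z i * u j * Kmat s i j := by
    rw [Finset.sum_comm]
    apply Finset.sum_congr rfl
    intro i _
    apply Finset.sum_congr rfl
    intro j _
    rw [Kmat_symm s j i]
    ring
  have hQv : ∑ i ∈ range N, v i * (∑' j, v j * Kmat s i j) ≤ 4 * (2 * (a*b) + 2 * (a*b)) := by
    refine (qform_le hs v N hvsupp).trans ?_
    have hexp : ∑ n ∈ range N, (v n)^2
        = t^2 * ∑ n ∈ range N, (z n)^2 + 2 * (t * t⁻¹) * ∑ n ∈ range N, z n * u n
          + (t⁻¹)^2 * ∑ n ∈ range N, (u n)^2 := by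
      simp only [hv]
      rw [Finset.mul_sum, Finset.mul_sum, Finset.mul_sum, ← Finset.sum_add_distrib,
        ← Finset.sum_add_distrib]
      apply Finset.sum_congr rfl
      intro n _
      ring
    have hti2 : (t⁻¹)^2 = a / b := by
      rw [← one_div, div_pow, one_pow, ht2]
      rw [one_div_div]
    have hcs : ∑ n ∈ range N, z n * u n ≤ a * b := Real.sum_mul_le_sqrt_mul_sqrt _ _ _
    have h1 : t^2 * ∑ n ∈ range N, (z n)^2 = a * b := by
      rw [hza, ht2]
      field_simp
    have h2 : (t⁻¹)^2 * ∑ n ∈ range N, (u n)^2 = a * b := by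
      rw [hub, hti2]
      field_simp
    rw [hexp, h1, h2, htinv]
    nlinarith [hcs]
  have hQw : 0 ≤ ∑ i ∈ range N, w i * (∑' j, w j * Kmat s i j) :=
    qform_nonneg hs0 w N hwsupp
  have hfinv : ∑ i ∈ range N, v i * (∑' j, v j * Kmat s i j)
      = ∑ i ∈ range N, ∑ j ∈ range N, v i * v j * Kmat s i j := bform_fin hs0 v v N hvsupp
  have hfinw : ∑ i ∈ range N, w i * (∑' j, w j * Kmat s i j)
      = ∑ i ∈ range N, ∑ j ∈ range N, w i * w j * Kmat s i j := bform_fin hs0 w w N hwsupp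
  have hfinB : ∑ i ∈ range N, z i * (∑' j, u j * Kmat s i j)
      = ∑ i ∈ range N, ∑ j ∈ range N, z i * u j * Kmat s i j := bform_fin hs0 z u N hu
  rw [hfinB]
  rw [hfinv] at hQv
  rw [hfinw] at hQw
  rw [hswap] at hpol
  linarith [hpol, hQv, hQw]

/-! ### Norm bound via truncation -/

lemma le_of_self_le_sqrt (P C : ℝ) (hP : 0 ≤ P) (hC : 0 ≤ C)
    (h : P ≤ 4 * Real.sqrt P * Real.sqrt C) : P ≤ 16 * C := by
  have hsP : Real.sqrt P * Real.sqrt P = P := Real.mul_self_sqrt hP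
  have hsC : Real.sqrt C * Real.sqrt C = C := Real.mul_self_sqrt hC
  rcases le_or_gt (Real.sqrt P) (4 * Real.sqrt C) with h1 | h1
  · nlinarith [Real.sqrt_nonneg P, Real.sqrt_nonneg C]
  · exfalso
    have hp0 : 0 < Real.sqrt P := lt_of_le_of_lt (by positivity) h1
    nlinarith [Real.sqrt_nonneg C]

lemma aop_sq_partial {s : ℝ} (hs : Real.sqrt 2 / 4 ≤ s) (z : ℕ → ℝ) (N : ℕ)
    (hz : ∀ n, N ≤ n → z n = 0) (M : ℕ) :
    ∑ n ∈ range M, (Aop s z n)^2 ≤ 16 * ∑ n ∈ range N, (z n)^2 := by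
  set u := fun n => if n < M then Aop s z n else 0 with hu
  have husupp : ∀ n, max N M ≤ n → u n = 0 := by
    intro n hn
    simp only [hu]
    rw [if_neg (by omega)]
  have hzsupp : ∀ n, max N M ≤ n → z n = 0 := fun n hn => hz n (le_trans (le_max_left N M) hn)
  have hB := bilinear_bound hs u z (max N M) husupp hzsupp
  have hP : ∑ i ∈ range (max N M), u i * (∑' j, z j * Kmat s i j) = ∑ n ∈ range M, (Aop s z n)^2 := by
    have h1 : ∑ i ∈ range M, u i * (∑' j, z j * Kmat s i j)
        = ∑ i ∈ range (max N M), u i * (∑' j, z j * Kmat s i j) := by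
      apply Finset.sum_subset (range_subset_range.mpr (le_max_right N M))
      intro i _ hi
      simp only [hu]
      rw [if_neg (by simpa using hi), zero_mul]
    rw [← h1]
    apply Finset.sum_congr rfl
    intro i hi
    simp only [hu]
    rw [if_pos (mem_range.mp hi), Aop]
    ring
  have hu2 : ∑ n ∈ range (max N M), (u n)^2 = ∑ n ∈ range M, (Aop s z n)^2 := by
    have h1 : ∑ n ∈ range M, (u n)^2 = ∑ n ∈ range (max N M), (u n)^2 := by
      apply Finset.sum_subset (range_subset_range.mpr (le_max_right N M))
      intro i _ hi
      simp only [hu]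
      rw [if_neg (by simpa using hi)]
      ring
    rw [← h1]
    apply Finset.sum_congr rfl
    intro i hi
    simp only [hu]
    rw [if_pos (mem_range.mp hi)]
  have hz2 : ∑ n ∈ range (max N M), (z n)^2 = ∑ n ∈ range N, (z n)^2 := by
    symm
    apply Finset.sum_subset (range_subset_range.mpr (le_max_left N M))
    intro i _ hi
    rw [hz i (by simpa using hi)]
    ring
  rw [hP, hu2, hz2] at hB
  exact le_of_self_le_sqrt _ _ (Finset.sum_nonneg (fun n _ => sq_nonneg _))
    (Finset.sum_nonneg (fun n _ => sq_nonneg _)) hB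

lemma aop_sq_partial_all {s : ℝ} (hs : Real.sqrt 2 / 4 ≤ s) (x : ℕ → ℝ)
    (hx2 : Summable (fun n => (x n)^2)) (M : ℕ) :
    ∑ n ∈ range M, (Aop s x n)^2 ≤ 16 * ∑' n, (x n)^2 := by
  have hs0 : 0 < s := spos hs
  set z := fun n => if n < M then Aop s x n else 0 with hz
  have hzsupp : ∀ n, M ≤ n → z n = 0 := by
    intro n hn
    simp only [hz]
    rw [if_neg (by omega)]
  set P := ∑ n ∈ range M, (Aop s x n)^2 with hP
  have hP0 : 0 ≤ P := Finset.sum_nonneg (fun n _ => sq_nonneg _)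
  have hzsq : ∑ n ∈ range M, (z n)^2 = P := by
    apply Finset.sum_congr rfl
    intro i hi
    simp only [hz]
    rw [if_pos (mem_range.mp hi)]
  have hstep : P = ∑' j, x j * Aop s z j := by
    have h1 : P = ∑ n ∈ range M, z n * Aop s x n := by
      apply Finset.sum_congr rfl
      intro i hi
      simp only [hz]
      rw [if_pos (mem_range.mp hi)]
      ring
    have h2 : ∀ n, z n * Aop s x n = ∑' j, z n * (x j * Kmat s n j) := by
      intro n
      rw [Aop, tsum_mul_left]
    have h3 : ∑ n ∈ range M, z n * Aop s x n
        = ∑' j, ∑ n ∈ range M, z n * (x j * Kmat s n j) := by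
      rw [Finset.sum_congr rfl (fun n _ => h2 n)]
      exact (Summable.tsum_finsetSum (fun n _ => ((summable_mul_K s hs0 x hx2 n).mul_left (z n)))).symm
    have h4 : ∀ j, ∑ n ∈ range M, z n * (x j * Kmat s n j) = x j * Aop s z j := by
      intro j
      have hAz : Aop s z j = ∑ n ∈ range M, z n * Kmat s j n := by
        rw [Aop]
        apply tsum_eq_sum
        intro n hn
        rw [hzsupp n (by simpa using hn), zero_mul]
      rw [hAz, Finset.mul_sum]
      apply Finset.sum_congr rfl
      intro n _
      rw [Kmat_symm s j n]
      ring
    rw [h1, h3]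
    exact tsum_congr h4
  have hAz_bdd : ∀ K, ∑ n ∈ range K, (Aop s z n)^2 ≤ 16 * P := by
    intro K
    have := aop_sq_partial hs z M hzsupp K
    rw [hzsq] at this
    exact this
  have hAz_sum : Summable (fun n => (Aop s z n)^2) :=
    summable_of_sum_range_le (fun n => sq_nonneg _) hAz_bdd
  have hAz_tsum : ∑' n, (Aop s z n)^2 ≤ 16 * P :=
    Real.tsum_le_of_sum_range_le (fun n => sq_nonneg _) hAz_bdd
  have hcs := tsum_cauchy_schwarz x (fun j => Aop s z j) hx2 hAz_sum
  rw [← hstep] at hcs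
  have hXnn : 0 ≤ ∑' n, (x n)^2 := tsum_nonneg (fun n => sq_nonneg _)
  have hsq16 : Real.sqrt (∑' n, (Aop s z n)^2) ≤ 4 * Real.sqrt P := by
    calc Real.sqrt (∑' n, (Aop s z n)^2) ≤ Real.sqrt (16 * P) := Real.sqrt_le_sqrt hAz_tsum
      _ = 4 * Real.sqrt P := by
          rw [show (16:ℝ) * P = 4^2 * P by ring, Real.sqrt_mul (by positivity),
            Real.sqrt_sq (by norm_num)]
  have hfinal : P ≤ 4 * Real.sqrt P * Real.sqrt (∑' n, (x n)^2) := by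
    calc P ≤ Real.sqrt (∑' n, (x n)^2) * Real.sqrt (∑' n, (Aop s z n)^2) := hcs
      _ ≤ Real.sqrt (∑' n, (x n)^2) * (4 * Real.sqrt P) := by
          apply mul_le_mul_of_nonneg_left hsq16 (Real.sqrt_nonneg _)
      _ = 4 * Real.sqrt P * Real.sqrt (∑' n, (x n)^2) := by ring
  exact le_of_self_le_sqrt P _ hP0 hXnn hfinal

lemma aop_tsum_sq_le {s : ℝ} (hs : Real.sqrt 2 / 4 ≤ s) (x : ℕ → ℝ)
    (hx2 : Summable (fun n => (x n)^2)) :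
    Summable (fun n => (Aop s x n)^2) ∧ ∑' n, (Aop s x n)^2 ≤ 16 * ∑' n, (x n)^2 :=
  ⟨summable_of_sum_range_le (fun n => sq_nonneg _) (aop_sq_partial_all hs x hx2),
   Real.tsum_le_of_sum_range_le (fun n => sq_nonneg _) (aop_sq_partial_all hs x hx2)⟩

/-! ### Lower bound : elementary estimates -/

lemma harmonic_le (N : ℕ) (hN : 1 ≤ N) :
    ∑ k ∈ range N, 1 / ((k:ℝ) + 1) ≤ 1 + Real.log N := by
  induction N with
  | zero => omega
  | succ M ih =>
    rcases Nat.eq_or_lt_of_le hN with h1 | h1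
    · simp [← h1]
    · have hM : 1 ≤ M := by omega
      have hMpos : (0:ℝ) < M := by exact_mod_cast hM
      have hlog : 1 / ((M:ℝ) + 1) ≤ Real.log (M+1) - Real.log M := by
        have h := Real.log_le_sub_one_of_pos (show (0:ℝ) < (M:ℝ)/((M:ℝ)+1) by positivity)
        rw [Real.log_div (by positivity) (by positivity)] at h
        have : (M:ℝ)/((M:ℝ)+1) - 1 = -(1/((M:ℝ)+1)) := by field_simp; ring
        rw [this] at h
        linarith
      rw [sum_range_succ]
      push_cast
      linarith [ih hM]

lemma logsum_ge (s : ℝ) (hs : 0 < s) (N : ℕ) :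
    Real.log ((N:ℝ) + s + 1) - Real.log (s + 1) ≤ ∑ n ∈ range N, 1 / ((n:ℝ) + s + 1) := by
  induction N with
  | zero => simp
  | succ M ih =>
    rw [sum_range_succ]
    have hlog : Real.log ((M:ℝ) + 1 + s + 1) - Real.log ((M:ℝ) + s + 1) ≤ 1 / ((M:ℝ) + s + 1) := by
      have h := Real.log_le_sub_one_of_pos
        (show (0:ℝ) < ((M:ℝ)+1+s+1)/((M:ℝ)+s+1) by positivity)
      rw [Real.log_div (by positivity) (by positivity)] at h
      have heq : ((M:ℝ)+1+s+1)/((M:ℝ)+s+1) - 1 = 1/((M:ℝ)+s+1) := by field_simp; ring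
      linarith [heq ▸ h]
    push_cast
    linarith

lemma sqrtsum_ge (n : ℕ) :
    2 * Real.sqrt ((n:ℝ) + 2) - 2 ≤ ∑ k ∈ range (n+1), 1 / Real.sqrt ((k:ℝ) + 1) := by
  induction n with
  | zero =>
    rw [show (0:ℕ)+1 = 1 from rfl, sum_range_one]
    norm_num
    nlinarith [Real.sq_sqrt (show (0:ℝ) ≤ 2 by norm_num), Real.sqrt_nonneg 2]
  | succ m ih =>
    rw [sum_range_succ]
    have key : 2 * Real.sqrt ((m:ℝ) + 1 + 2) - 2 * Real.sqrt ((m:ℝ) + 2)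
        ≤ 1 / Real.sqrt ((m:ℝ) + 1 + 1) := by
      set a := Real.sqrt ((m:ℝ) + 2) with ha
      set b := Real.sqrt ((m:ℝ) + 3) with hb
      have ha2 : a^2 = (m:ℝ) + 2 := Real.sq_sqrt (by positivity)
      have hb2 : b^2 = (m:ℝ) + 3 := Real.sq_sqrt (by positivity)
      have hapos : 0 < a := Real.sqrt_pos.mpr (by positivity)
      have hbpos : 0 < b := Real.sqrt_pos.mpr (by positivity)
      have heq1 : ((m:ℝ) + 1 + 2) = (m:ℝ) + 3 := by ring
      have heq2 : ((m:ℝ) + 1 + 1) = (m:ℝ) + 2 := by ring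
      rw [heq1, heq2, ← ha, ← hb, ← sub_nonneg]
      have key2 : 1/a - (2*b - 2*a) = (1 - (2*b - 2*a)*a)/a := by
        field_simp
      rw [key2]
      apply div_nonneg _ (le_of_lt hapos)
      nlinarith [sq_nonneg (a - b)]
    push_cast
    push_cast at ih
    linarith

lemma invsq_sum_le (s : ℝ) (hs : 0 < s) (N : ℕ) :
    ∑ n ∈ range N, 1 / (((n:ℝ) + s + 1))^2 ≤ 1/s := by
  have hper : ∀ n : ℕ, 1 / (((n:ℝ) + s + 1))^2
      ≤ 1/((n:ℝ) + s) - 1/((n:ℝ) + 1 + s) := by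
    intro n
    have h1 : (0:ℝ) < (n:ℝ) + s := by positivity
    have h2 : (0:ℝ) < (n:ℝ) + s + 1 := by positivity
    rw [← sub_nonneg]
    have : 1/((n:ℝ) + s) - 1/((n:ℝ) + 1 + s) - 1 / (((n:ℝ) + s + 1))^2
        = 1 / (((n:ℝ)+s) * ((n:ℝ)+s+1)^2) := by
      field_simp
      ring
    rw [this]
    positivity
  calc ∑ n ∈ range N, 1 / (((n:ℝ) + s + 1))^2
      ≤ ∑ n ∈ range N, (1/((n:ℝ) + s) - 1/((n:ℝ) + 1 + s)) := Finset.sum_le_sum (fun n _ => hper n)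
    _ = 1/s - 1/((N:ℝ) + s) := by
        have := Finset.sum_range_sub' (fun n : ℕ => 1/((n:ℝ) + s)) N
        simp only [Nat.cast_zero, zero_add] at this
        rw [← this]
        apply Finset.sum_congr rfl
        intro n _
        push_cast
        ring_nf
    _ ≤ 1/s := by
        have : (0:ℝ) ≤ 1/((N:ℝ) + s) := by positivity
        linarith

lemma sqrt_err_sum_le (s : ℝ) (hs : 0 < s) (N : ℕ) :
    ∑ n ∈ range N, Real.sqrt ((n:ℝ)+1) / (((n:ℝ) + s + 1))^2 ≤ 4 := by
  have hper : ∀ n : ℕ, Real.sqrt ((n:ℝ)+1) / (((n:ℝ) + s + 1))^2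
      ≤ 4/Real.sqrt ((n:ℝ)+1) - 4/Real.sqrt (((n:ℝ)+1)+1) := by
    intro n
    set a := Real.sqrt ((n:ℝ)+1) with ha
    set b := Real.sqrt (((n:ℝ)+1)+1) with hb
    have ha2 : a^2 = (n:ℝ)+1 := Real.sq_sqrt (by positivity)
    have hb2 : b^2 = (n:ℝ)+2 := by
      rw [hb, show (((n:ℝ)+1)+1) = (n:ℝ)+2 by ring]
      exact Real.sq_sqrt (by positivity)
    have hapos : 0 < a := Real.sqrt_pos.mpr (by positivity)
    have hbpos : 0 < b := Real.sqrt_pos.mpr (by positivity)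
    have ha1 : 1 ≤ a := by nlinarith [Nat.cast_nonneg (α := ℝ) n]
    have hab : a ≤ b := by nlinarith
    have hstepA : a / (((n:ℝ) + s + 1))^2 ≤ 1/a^3 := by
      have h1 : a/((a^2)^2) = 1/a^3 := by
        rw [← pow_mul]
        rw [div_eq_div_iff (by positivity) (by positivity)]
        ring
      rw [← h1]
      apply div_le_div_of_nonneg_left (le_of_lt hapos) (by positivity)
      nlinarith [Nat.cast_nonneg (α := ℝ) n]
    have hstepB : 1/a^3 ≤ 4/a - 4/b := by
      rw [← sub_nonneg]
      have hnum : 4/a - 4/b - 1/a^3 = (4*a^2*b - 4*a^3 - b)/(a^3*b) := by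
        field_simp
      rw [hnum]
      apply div_nonneg _ (by positivity)
      have hident : (4*a^2*b - 4*a^3 - b)*(a+b) = 4*a^2*(b^2-a^2) - a*b - b^2 := by ring
      have hdiff : b^2 - a^2 = 1 := by rw [ha2, hb2]; ring
      nlinarith [sq_nonneg (a-b), mul_pos hapos hbpos]
    exact hstepA.trans hstepB
  calc ∑ n ∈ range N, Real.sqrt ((n:ℝ)+1) / (((n:ℝ) + s + 1))^2
      ≤ ∑ n ∈ range N, (4/Real.sqrt ((n:ℝ)+1) - 4/Real.sqrt (((n:ℝ)+1)+1)) :=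
        Finset.sum_le_sum (fun n _ => hper n)
    _ = 4/Real.sqrt 1 - 4/Real.sqrt ((N:ℝ)+1) := by
        have := Finset.sum_range_sub' (fun n : ℕ => 4/Real.sqrt ((n:ℝ)+1)) N
        simp only [Nat.cast_zero, zero_add] at this
        rw [← this]
        apply Finset.sum_congr rfl
        intro n _
        push_cast
        ring_nf
    _ ≤ 4 := by
        rw [Real.sqrt_one]
        have : (0:ℝ) ≤ 4/Real.sqrt ((N:ℝ)+1) := by positivity
        linarith

noncomputable def xtest (N : ℕ) : ℕ → ℝ := fun k => if k < N then 1/Real.sqrt ((k:ℝ)+1) else 0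

lemma xtest_supp (N : ℕ) : ∀ n, N ≤ n → xtest N n = 0 := by
  intro n hn
  rw [xtest, if_neg (by omega)]

lemma q_lower {s : ℝ} (hs : Real.sqrt 2 / 4 ≤ s) (N : ℕ) (hN : 1 ≤ N) :
    4*Real.log N - (4*Real.log (s+1) + 36)
      ≤ ∑' n, wgt s n * (Sp (xtest N) n)^2 := by
  have hs0 : 0 < s := spos hs
  -- per-term lower bound on range N
  have hterm : ∀ n ∈ range N,
      4/((n:ℝ)+s+1) - 4*s*(1/(((n:ℝ)+s+1))^2) - 8*(Real.sqrt ((n:ℝ)+1)/(((n:ℝ)+s+1))^2)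
        ≤ wgt s n * (Sp (xtest N) n)^2 := by
    intro n hn
    have hnN : n < N := mem_range.mp hn
    set D := (n:ℝ) + s + 1 with hD
    have hDpos : 0 < D := by positivity
    set A := Real.sqrt ((n:ℝ)+1) with hA
    have hA2 : A^2 = (n:ℝ)+1 := Real.sq_sqrt (by positivity)
    have hA1 : 1 ≤ A := by nlinarith [Real.sqrt_nonneg ((n:ℝ)+1), Nat.cast_nonneg (α := ℝ) n]
    -- Sp = sum of 1/sqrt
    have hSp : Sp (xtest N) n = ∑ k ∈ range (n+1), 1/Real.sqrt ((k:ℝ)+1) := by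
      rw [Sp]
      apply Finset.sum_congr rfl
      intro k hk
      have hkn : k < n + 1 := mem_range.mp hk
      rw [xtest, if_pos (by omega : k < N)]
    have hSp_ge : 2*A - 2 ≤ Sp (xtest N) n := by
      rw [hSp]
      have h1 := sqrtsum_ge n
      have h2 : A ≤ Real.sqrt ((n:ℝ)+2) := Real.sqrt_le_sqrt (by linarith)
      linarith
    have hSp_sq : (2*A - 2)^2 ≤ (Sp (xtest N) n)^2 := by
      apply sq_le_sq'
      · nlinarith
      · exact hSp_ge
    have hwgt : 1/D^2 ≤ wgt s n := by
      rw [wgt]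
      apply one_div_le_one_div_of_le (by positivity)
      nlinarith [Nat.cast_nonneg (α := ℝ) n]
    have hmul : (1/D^2) * (2*A - 2)^2 ≤ wgt s n * (Sp (xtest N) n)^2 := by
      apply mul_le_mul hwgt hSp_sq (sq_nonneg _) (wgt_nonneg s hs0 n)
    have hexp : 4/D - 4*s*(1/D^2) - 8*(A/D^2) ≤ (1/D^2) * (2*A - 2)^2 := by
      have hid : 4/D - 4*s*(1/D^2) - 8*(A/D^2) = (4*((n:ℝ)+1) - 8*A)/D^2 := by
        field_simp
        ring
      rw [hid]
      have : (1/D^2) * (2*A-2)^2 = (2*A-2)^2/D^2 := by ring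
      rw [this]
      apply div_le_div_of_nonneg_right (c := D^2) ?_ (by positivity)
      nlinarith [hA2]
    linarith [hmul, hexp]
  -- now sum up
  have hsum_le_tsum : ∑ n ∈ range N, wgt s n * (Sp (xtest N) n)^2
      ≤ ∑' n, wgt s n * (Sp (xtest N) n)^2 :=
    Summable.sum_le_tsum (range N) (fun n _ => mul_nonneg (wgt_nonneg s hs0 n) (sq_nonneg _))
      (hardy_summable hs (xtest N) N (xtest_supp N))
  have hsum_ge : ∑ n ∈ range N,
      (4/((n:ℝ)+s+1) - 4*s*(1/(((n:ℝ)+s+1))^2) - 8*(Real.sqrt ((n:ℝ)+1)/(((n:ℝ)+s+1))^2))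
      ≤ ∑ n ∈ range N, wgt s n * (Sp (xtest N) n)^2 := Finset.sum_le_sum hterm
  have hsplit : ∑ n ∈ range N,
      (4/((n:ℝ)+s+1) - 4*s*(1/(((n:ℝ)+s+1))^2) - 8*(Real.sqrt ((n:ℝ)+1)/(((n:ℝ)+s+1))^2))
      = 4 * ∑ n ∈ range N, 1/((n:ℝ)+s+1)
        - 4*s * ∑ n ∈ range N, 1/(((n:ℝ)+s+1))^2
        - 8 * ∑ n ∈ range N, Real.sqrt ((n:ℝ)+1)/(((n:ℝ)+s+1))^2 := by
    rw [Finset.sum_sub_distrib, Finset.sum_sub_distrib, ← Finset.mul_sum, ← Finset.mul_sum]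
    congr 2
    rw [Finset.mul_sum]
    apply Finset.sum_congr rfl
    intro n _
    rw [mul_one_div]
  have h1 : Real.log ((N:ℝ)) - Real.log (s+1) ≤ ∑ n ∈ range N, 1/((n:ℝ)+s+1) := by
    have := logsum_ge s hs0 N
    have hNpos : (0:ℝ) < N := by exact_mod_cast hN
    have hmono : Real.log ((N:ℝ)) ≤ Real.log ((N:ℝ)+s+1) :=
      Real.log_le_log hNpos (by linarith)
    linarith
  have h2 : 4*s * ∑ n ∈ range N, 1/(((n:ℝ)+s+1))^2 ≤ 4 := by
    have := invsq_sum_le s hs0 N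
    have h4s : 0 < 4*s := by positivity
    calc 4*s * ∑ n ∈ range N, 1/(((n:ℝ)+s+1))^2 ≤ 4*s * (1/s) := by
          apply mul_le_mul_of_nonneg_left this (le_of_lt h4s)
      _ = 4 := by field_simp
  have h3 : 8 * ∑ n ∈ range N, Real.sqrt ((n:ℝ)+1)/(((n:ℝ)+s+1))^2 ≤ 32 := by
    have := sqrt_err_sum_le s hs0 N
    linarith
  calc 4*Real.log N - (4*Real.log (s+1) + 36)
      ≤ 4 * ∑ n ∈ range N, 1/((n:ℝ)+s+1)
        - 4*s * ∑ n ∈ range N, 1/(((n:ℝ)+s+1))^2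
        - 8 * ∑ n ∈ range N, Real.sqrt ((n:ℝ)+1)/(((n:ℝ)+s+1))^2 := by
        have h1' : 4*(Real.log ((N:ℝ)) - Real.log (s+1)) ≤ 4 * ∑ n ∈ range N, 1/((n:ℝ)+s+1) := by
          linarith
        linarith
    _ = ∑ n ∈ range N,
        (4/((n:ℝ)+s+1) - 4*s*(1/(((n:ℝ)+s+1))^2) - 8*(Real.sqrt ((n:ℝ)+1)/(((n:ℝ)+s+1))^2)) :=
        hsplit.symm
    _ ≤ ∑ n ∈ range N, wgt s n * (Sp (xtest N) n)^2 := hsum_ge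
    _ ≤ ∑' n, wgt s n * (Sp (xtest N) n)^2 := hsum_le_tsum

lemma aop_div_form (s : ℝ) (x : ℕ → ℝ) (n : ℕ) :
    (∑' j : ℕ, x j / ((max n j : ℝ) + s)) = Aop s x n := by
  rw [Aop]
  apply tsum_congr
  intro j
  rw [Kmat, mul_one_div]

lemma ratio_le_four {s : ℝ} (hs : Real.sqrt 2 / 4 ≤ s) (r : ℝ)
    (hr : r ∈ { r : ℝ | ∃ x : ℕ → ℝ, Summable (fun n => (x n) ^ 2) ∧ x ≠ 0 ∧
      r = Real.sqrt (∑' n : ℕ, (∑' j : ℕ, x j / ((max n j : ℝ) + s)) ^ 2) /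
          Real.sqrt (∑' n : ℕ, (x n) ^ 2) }) : r ≤ 4 := by
  obtain ⟨x, hx2, hxne, hreq⟩ := hr
  have hconv : (∑' n : ℕ, (∑' j : ℕ, x j / ((max n j : ℝ) + s)) ^ 2)
      = ∑' n, (Aop s x n)^2 := by
    apply tsum_congr
    intro n
    rw [aop_div_form s x n]
  rw [hreq, hconv]
  obtain ⟨k, hk⟩ := Function.ne_iff.mp hxne
  have hXpos : 0 < ∑' n, (x n)^2 := by
    have h1 : 0 < (x k)^2 := by
      have := abs_pos.mpr hk
      nlinarith [sq_abs (x k)]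
    have h2 : (x k)^2 ≤ ∑' n, (x n)^2 := Summable.le_tsum hx2 k (fun j _ => sq_nonneg _)
    linarith
  have hsX : 0 < Real.sqrt (∑' n, (x n)^2) := Real.sqrt_pos.mpr hXpos
  rw [div_le_iff₀ hsX]
  obtain ⟨hsummA, hboundA⟩ := aop_tsum_sq_le hs x hx2
  calc Real.sqrt (∑' n, (Aop s x n)^2)
      ≤ Real.sqrt (16 * ∑' n, (x n)^2) := Real.sqrt_le_sqrt hboundA
    _ = 4 * Real.sqrt (∑' n, (x n)^2) := by
        rw [show (16:ℝ) * ∑' n, (x n)^2 = 4^2 * ∑' n, (x n)^2 by ring,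
          Real.sqrt_mul (by positivity), Real.sqrt_sq (by norm_num)]

lemma lower_element {s : ℝ} (hs : Real.sqrt 2 / 4 ≤ s) (N : ℕ) (hN : 1 ≤ N) :
    ∃ r ∈ { r : ℝ | ∃ x : ℕ → ℝ, Summable (fun n => (x n) ^ 2) ∧ x ≠ 0 ∧
      r = Real.sqrt (∑' n : ℕ, (∑' j : ℕ, x j / ((max n j : ℝ) + s)) ^ 2) /
          Real.sqrt (∑' n : ℕ, (x n) ^ 2) },
      (4*Real.log N - (4*Real.log (s+1) + 36))/(1 + Real.log N) ≤ r := by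
  have hs0 : 0 < s := spos hs
  set x := xtest N with hxdef
  have hsupp := xtest_supp N
  have hx2 : Summable (fun n => (x n)^2) := summable_sq_of_supp x N hsupp
  have hxne : x ≠ 0 := by
    intro h
    have h0 := congrFun h 0
    rw [hxdef, xtest] at h0
    simp only [if_pos (by omega : 0 < N)] at h0
    norm_num at h0
  set r := Real.sqrt (∑' n : ℕ, (∑' j : ℕ, x j / ((max n j : ℝ) + s)) ^ 2) /
      Real.sqrt (∑' n : ℕ, (x n) ^ 2) with hrdef
  refine ⟨r, ⟨x, hx2, hxne, rfl⟩, ?_⟩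
  -- compute X
  set X := ∑' n : ℕ, (x n)^2 with hX
  have hXeq : X = ∑ n ∈ range N, 1/((n:ℝ)+1) := by
    rw [hX]
    rw [tsum_eq_sum (s := range N) (fun n hn => by
      rw [hxdef, hsupp n (by simpa using hn)]; ring)]
    apply Finset.sum_congr rfl
    intro n hn
    rw [hxdef, xtest, if_pos (mem_range.mp hn), div_pow, one_pow,
      Real.sq_sqrt (by positivity)]
  have hX1 : 1 ≤ X := by
    rw [hXeq]
    have hsingle := Finset.single_le_sum (f := fun n : ℕ => 1/((n:ℝ)+1))
      (fun n _ => by positivity) (mem_range.mpr (show 0 < N by omega))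
    norm_num at hsingle
    calc (1:ℝ) ≤ ∑ n ∈ range N, ((n:ℝ)+1)⁻¹ := hsingle
      _ = ∑ n ∈ range N, 1/((n:ℝ)+1) := by
          apply Finset.sum_congr rfl
          intro n _
          rw [one_div]
  have hXle : X ≤ 1 + Real.log N := by rw [hXeq]; exact harmonic_le N hN
  have hXpos : 0 < X := by linarith
  have hsX : 0 < Real.sqrt X := Real.sqrt_pos.mpr hXpos
  -- Q and its bounds
  set Q := ∑ i ∈ range N, x i * Aop s x i with hQ
  have hQid : Q = ∑' n, wgt s n * (Sp x n)^2 := by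
    rw [hQ]
    exact quad_identity s hs0 x N hsupp
  have hQlow : 4*Real.log N - (4*Real.log (s+1) + 36) ≤ Q := by
    rw [hQid, hxdef]
    exact q_lower hs N hN
  have hQ0 : 0 ≤ Q := by
    rw [hQid]
    exact tsum_nonneg (fun n => mul_nonneg (wgt_nonneg s hs0 n) (sq_nonneg _))
  -- Cauchy–Schwarz
  obtain ⟨hsummA, _⟩ := aop_tsum_sq_le hs x hx2
  set T := ∑' n, (Aop s x n)^2 with hT
  have hTnn : 0 ≤ T := tsum_nonneg (fun n => sq_nonneg _)
  have hQcs : Q ≤ Real.sqrt X * Real.sqrt T := by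
    calc Q ≤ Real.sqrt (∑ n ∈ range N, (x n)^2) * Real.sqrt (∑ n ∈ range N, (Aop s x n)^2) :=
          Real.sum_mul_le_sqrt_mul_sqrt _ _ _
      _ ≤ Real.sqrt X * Real.sqrt T := by
          apply mul_le_mul
          · apply Real.sqrt_le_sqrt
            rw [hX]
            exact Summable.sum_le_tsum (range N) (fun n _ => sq_nonneg _) hx2
          · apply Real.sqrt_le_sqrt
            rw [hT]
            exact Summable.sum_le_tsum (range N) (fun n _ => sq_nonneg _) hsummA
          · positivity
          · positivity
  -- r = sqrt T / sqrt X
  have hrT : r = Real.sqrt T / Real.sqrt X := by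
    rw [hrdef, hT, hX]
    congr 2
    apply tsum_congr
    intro n
    rw [aop_div_form s x n]
  have hrge : Q / X ≤ r := by
    rw [hrT, div_le_div_iff₀ hXpos hsX]
    have hfact : Real.sqrt X * Real.sqrt X = X := Real.mul_self_sqrt hXpos.le
    nlinarith [hQcs, hsX.le, Real.sqrt_nonneg T]
  have hlogN0 : 0 ≤ Real.log N := Real.log_nonneg (by exact_mod_cast hN)
  have hden : (0:ℝ) < 1 + Real.log N := by linarith
  rcases le_or_gt (4*Real.log N - (4*Real.log (s+1) + 36)) 0 with hneg | hpos
  · have h1 : (4*Real.log N - (4*Real.log (s+1) + 36))/(1 + Real.log N) ≤ 0 :=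
      div_nonpos_of_nonpos_of_nonneg hneg hden.le
    have h2 : 0 ≤ Q / X := div_nonneg hQ0 hXpos.le
    linarith [hrge]
  · calc (4*Real.log N - (4*Real.log (s+1) + 36))/(1 + Real.log N)
        ≤ (4*Real.log N - (4*Real.log (s+1) + 36))/X :=
          div_le_div_of_nonneg_left hpos.le hXpos hXle
      _ ≤ Q/X := (div_le_div_iff_of_pos_right hXpos).mpr hQlow
      _ ≤ r := hrge

/-- The operator norm of the `L`-matrix `A_s = [1/(max(i,j)+s)]` acting on `ℓ²`,
defined as the supremum of the ratios `‖A_s x‖₂ / ‖x‖₂` over nonzero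
square-summable real sequences `x`. -/
noncomputable def AsOpNorm (s : ℝ) : ℝ :=
  sSup { r : ℝ | ∃ x : ℕ → ℝ, Summable (fun n => (x n) ^ 2) ∧ x ≠ 0 ∧
    r = Real.sqrt (∑' n : ℕ, (∑' j : ℕ, x j / ((max n j : ℝ) + s)) ^ 2) /
        Real.sqrt (∑' n : ℕ, (x n) ^ 2) }

/-- For every `s ≥ 1/(2√2)`, the operator norm of `A_s` on `ℓ²` equals `4`. -/
theorem As_opNorm_eq_four (s : ℝ) (hs : 1 / (2 * Real.sqrt 2) ≤ s) :
    AsOpNorm s = 4 := by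
  have hsqrt2 : Real.sqrt 2 * Real.sqrt 2 = 2 := Real.mul_self_sqrt (by norm_num)
  have hsqrt2pos : 0 < Real.sqrt 2 := Real.sqrt_pos.mpr (by norm_num)
  have heq : 1 / (2 * Real.sqrt 2) = Real.sqrt 2 / 4 := by
    rw [div_eq_div_iff (by positivity) (by norm_num)]
    nlinarith
  have hs' : Real.sqrt 2 / 4 ≤ s := heq ▸ hs
  rw [AsOpNorm]
  set S := { r : ℝ | ∃ x : ℕ → ℝ, Summable (fun n => (x n) ^ 2) ∧ x ≠ 0 ∧
    r = Real.sqrt (∑' n : ℕ, (∑' j : ℕ, x j / ((max n j : ℝ) + s)) ^ 2) /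
        Real.sqrt (∑' n : ℕ, (x n) ^ 2) } with hS
  have hbdd : BddAbove S := ⟨4, fun r hr => ratio_le_four hs' r hr⟩
  apply le_antisymm
  · exact Real.sSup_le (fun r hr => ratio_le_four hs' r hr) (by norm_num)
  · set K := 4*Real.log (s+1) + 36 with hK
    have hmem : ∀ᶠ N : ℕ in atTop,
        (4*Real.log N - K)/(1 + Real.log N) ≤ sSup S := by
      rw [eventually_atTop]
      refine ⟨1, fun N hN => ?_⟩
      obtain ⟨r, hrS, hrge⟩ := lower_element hs' N hN
      exact le_trans hrge (le_csSup hbdd hrS)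
    have hcomp : Tendsto (fun N : ℕ => Real.log N) atTop atTop :=
      Real.tendsto_log_atTop.comp tendsto_natCast_atTop_atTop
    have hg : Tendsto (fun L : ℝ => (4*L - K)/(1+L)) atTop (nhds 4) := by
      have h1 : Tendsto (fun L : ℝ => (K+4)/(1+L)) atTop (nhds 0) :=
        Tendsto.div_atTop tendsto_const_nhds (tendsto_atTop_add_const_left _ 1 tendsto_id)
      have h2 : Tendsto (fun L : ℝ => 4 - (K+4)/(1+L)) atTop (nhds 4) := by
        simpa using (tendsto_const_nhds (x := (4:ℝ))).sub h1
      apply h2.congr'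
      filter_upwards [eventually_ge_atTop (0:ℝ)] with L hL
      have hpos : (0:ℝ) < 1 + L := by linarith
      field_simp
      ring
    have htend : Tendsto (fun N : ℕ => (4*Real.log N - K)/(1 + Real.log N)) atTop (nhds 4) :=
      hg.comp hcomp
    exact le_of_tendsto htend hmem
end

section
/- Let s ≥ 1 be real and 1 < p < ∞. For every sequence x = (x_n)_{n≥0} of real numbers with Σ_{n≥0}|x_n|^p < ∞, one has ‖A_s x‖_p ≤ (p²/(p−1))‖x‖_p, i.e. Σ_{n=0}^∞ |Σ_{j=0}^∞ x_j/(max(n,j)+s)|^p ≤ (p²/(p−1))^p Σ_{n=0}^∞ |x_n|^p. -/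
open Finset MeasureTheory
open scoped ENNReal NNReal


/-- Tangent-line inequality for concave `b ^ c`, `0 < c < 1`. -/
lemma key1 {c b : ℝ} (hc0 : 0 < c) (hc1 : c < 1) (hb : 1 ≤ b) :
    c * b ^ (c - 1) ≤ b ^ c - (b - 1) ^ c := by
  have hb0 : (0:ℝ) < b := lt_of_lt_of_le one_pos hb
  have hs : (-1:ℝ) ≤ -(1/b) := by
    rw [neg_le_neg_iff]
    exact div_le_one_of_le₀ hb hb0.le
  have hbern := rpow_one_add_le_one_add_mul_self hs hc0.le hc1.le
  have h1 : (1 + -(1/b)) = (b-1)/b := by field_simp; ring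
  rw [h1] at hbern
  have h2 : ((b-1)/b) ^ c = (b-1)^c / b^c := Real.div_rpow (show (0:ℝ) ≤ b - 1 by linarith) hb0.le c
  have h3 : (0:ℝ) < b ^ c := Real.rpow_pos_of_pos hb0 c
  have h4 : (b-1)^c ≤ (1 + c * -(1/b)) * b ^ c := by
    rw [h2] at hbern
    calc (b-1)^c = ((b-1)^c / b^c) * b^c := by field_simp
    _ ≤ (1 + c * -(1/b)) * b ^ c := mul_le_mul_of_nonneg_right hbern h3.le
  have h5 : b ^ (c - 1) = b ^ c / b := by
    rw [Real.rpow_sub hb0, Real.rpow_one]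
  rw [h5]
  have h6 : (1 + c * -(1/b)) * b ^ c = b ^ c - c * (b ^ c / b) := by
    field_simp; ring
  rw [h6] at h4
  linarith

/-- Tangent-line inequality for convex `b ^ (-m)`, `0 < m < 1`. -/
lemma key2_s5 {m b : ℝ} (hm0 : 0 < m) (hm1 : m < 1) (hb : 2 ≤ b) :
    m * b ^ (-1 - m) ≤ (b - 1) ^ (-m) - b ^ (-m) := by
  have hb0 : (0:ℝ) < b := by linarith
  have hb1 : (0:ℝ) < b - 1 := by linarith
  have hs : (-1:ℝ) ≤ -(1/b) := by
    rw [neg_le_neg_iff]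
    exact div_le_one_of_le₀ (by linarith) hb0.le
  have hbern := rpow_one_add_le_one_add_mul_self hs hm0.le hm1.le
  have h1 : (1 + -(1/b)) = (b-1)/b := by field_simp; ring
  rw [h1] at hbern
  have hx : (0:ℝ) < ((b - 1) / b) ^ m := Real.rpow_pos_of_pos (by positivity) m
  have hpos : (0:ℝ) < 1 + m/b := by positivity
  have h2 : (1 + m/b) * ((b-1)/b) ^ m ≤ 1 := by
    calc (1 + m/b) * ((b-1)/b) ^ m ≤ (1 + m/b) * (1 + m * -(1/b)) :=
          mul_le_mul_of_nonneg_left hbern (by positivity)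
    _ = 1 - (m/b)^2 := by field_simp; ring
    _ ≤ 1 := by nlinarith [sq_nonneg (m/b)]
  have h3 : 1 + m/b ≤ ((b-1)/b) ^ (-m) := by
    rw [Real.rpow_neg (by positivity)]
    refine (le_inv_comm₀ hpos hx).mpr ?_
    rw [← one_div, le_div_iff₀ hpos]
    linarith
  have h4 : (b-1)^(-m) = b^(-m) * ((b-1)/b)^(-m) := by
    rw [Real.div_rpow hb1.le hb0.le]
    have : b ^ (-m) ≠ 0 := (Real.rpow_pos_of_pos hb0 _).ne'
    field_simp
  have hbm : (0:ℝ) < b ^ (-m) := Real.rpow_pos_of_pos hb0 _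
  have h5 : b^(-m) * (1+m/b) ≤ (b-1)^(-m) := by
    rw [h4]
    exact mul_le_mul_of_nonneg_left h3 hbm.le
  have h6 : b^(-m) * (1+m/b) = b^(-m) + m * b^(-1-m) := by
    rw [show (-1-m : ℝ) = -m-1 by ring, Real.rpow_sub hb0, Real.rpow_one]
    field_simp
  rw [h6] at h5
  linarith

/-- Comparison bound for the head sum. -/
lemma head_sum {s r : ℝ} (hs : 1 ≤ s) (hr : 1 < r) (n : ℕ) :
    ∑ j ∈ Finset.range (n + 1), ((j : ℝ) + s) ^ (-(1/r)) ≤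
      (r / (r - 1)) * ((n : ℝ) + s) ^ (1 - 1/r) := by
  set c : ℝ := 1 - 1/r with hc
  have hr0 : (0:ℝ) < r := by linarith
  have h1r : 1/r < 1 := by rw [div_lt_one hr0]; linarith
  have h0r : (0:ℝ) < 1/r := by positivity
  have hc0 : 0 < c := by rw [hc]; linarith
  have hc1 : c < 1 := by rw [hc]; linarith
  have key : ∀ j : ℕ, c * ((j:ℝ) + s) ^ (-(1/r)) ≤
      (((j+1) : ℕ) + (s-1)) ^ c - ((j : ℕ) + (s-1)) ^ c := by
    intro j
    have hb : (1:ℝ) ≤ (j:ℝ) + s := by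
      have : (0:ℝ) ≤ (j:ℝ) := Nat.cast_nonneg j
      linarith
    have := key1 hc0 hc1 hb
    have e1 : c - 1 = -(1/r) := by rw [hc]; ring
    have e2 : ((j:ℝ) + s) - 1 = ((j:ℕ):ℝ) + (s-1) := by push_cast; ring
    have e3 : ((j:ℝ) + s) = (((j+1):ℕ):ℝ) + (s-1) := by push_cast; ring
    rw [e1, e2, e3] at this
    rw [e3]
    exact this
  have tele : ∑ j ∈ Finset.range (n+1),
      ((((j+1) : ℕ) + (s-1) : ℝ) ^ c - (((j : ℕ) : ℝ) + (s-1)) ^ c)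
      = ((((n+1) : ℕ) : ℝ) + (s-1)) ^ c - (((0:ℕ):ℝ) + (s-1)) ^ c := by
    exact Finset.sum_range_sub (fun j => (((j : ℕ) : ℝ) + (s-1)) ^ c) (n+1)
  have hsum : c * ∑ j ∈ Finset.range (n+1), ((j : ℝ) + s) ^ (-(1/r)) ≤
      ((((n+1) : ℕ) : ℝ) + (s-1)) ^ c := by
    rw [Finset.mul_sum]
    calc ∑ j ∈ Finset.range (n+1), c * ((j : ℝ) + s) ^ (-(1/r))
        ≤ ∑ j ∈ Finset.range (n+1),
          (((((j+1) : ℕ) : ℝ) + (s-1)) ^ c - (((j : ℕ) : ℝ) + (s-1)) ^ c) :=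
          Finset.sum_le_sum (fun j _ => key j)
    _ = ((((n+1) : ℕ) : ℝ) + (s-1)) ^ c - (((0:ℕ):ℝ) + (s-1)) ^ c := tele
    _ ≤ ((((n+1) : ℕ) : ℝ) + (s-1)) ^ c := by
        have : (0:ℝ) ≤ (((0:ℕ):ℝ) + (s-1)) ^ c := Real.rpow_nonneg (by simp; linarith) c
        linarith
  have e4 : ((((n+1) : ℕ) : ℝ) + (s-1)) = ((n:ℝ) + s) := by push_cast; ring
  rw [e4] at hsum
  have : ∑ j ∈ Finset.range (n+1), ((j : ℝ) + s) ^ (-(1/r)) ≤ (1/c) * ((n:ℝ) + s) ^ c := by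
    rw [div_mul_eq_mul_div, le_div_iff₀ hc0]
    linarith [hsum]
  have hcr : 1/c = r/(r-1) := by
    rw [hc]; field_simp
  rw [hcr, hc] at this
  exact this

lemma tail_sum {s r : ℝ} (hs : 1 ≤ s) (hr : 1 < r) (n : ℕ) :
    ∑' i : ℕ, ENNReal.ofReal ((((n + 1 + i : ℕ) : ℝ) + s) ^ (-(1 + 1/r))) ≤
      ENNReal.ofReal (r * (((n : ℕ) : ℝ) + s) ^ (-(1/r))) := by
  have hr0 : (0:ℝ) < r := by linarith
  have h1r : 1/r < 1 := by rw [div_lt_one hr0]; linarith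
  have h0r : (0:ℝ) < 1/r := by positivity
  set F : ℕ → ℝ := fun k => (((n + k : ℕ) : ℝ) + s) ^ (-(1/r)) with hF
  have hFnn : ∀ k, 0 ≤ F k := fun k => Real.rpow_nonneg (by positivity) _
  have hFmono : ∀ k, F (k+1) ≤ F k := by
    intro k
    apply Real.rpow_le_rpow_of_nonpos (by positivity) _ (by linarith)
    push_cast; linarith
  have step : ∀ i : ℕ, (((n + 1 + i : ℕ) : ℝ) + s) ^ (-(1 + 1/r)) ≤ r * (F i - F (i+1)) := by
    intro i
    set b : ℝ := ((n + 1 + i : ℕ) : ℝ) + s with hb'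
    have hb : 2 ≤ b := by
      rw [hb']; push_cast
      have hn0 : (0:ℝ) ≤ (n:ℝ) := Nat.cast_nonneg n
      have hi0 : (0:ℝ) ≤ (i:ℝ) := Nat.cast_nonneg i
      have h2b : (1:ℝ) ≤ (n:ℝ) + 1 + (i:ℝ) := by linarith
      linarith
    have hk := key2_s5 h0r h1r hb
    have e1 : b - 1 = ((n + i : ℕ) : ℝ) + s := by rw [hb']; push_cast; ring
    have e2 : F (i+1) = b ^ (-(1/r)) := by
      rw [hF, hb']; push_cast; ring_nf
    have e3 : F i = (b-1) ^ (-(1/r)) := by rw [hF, e1]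
    have e4 : (-(1 + 1/r) : ℝ) = -1 - 1/r := by ring
    rw [e4]
    rw [e2, e3]
    have := mul_le_mul_of_nonneg_left hk hr0.le
    calc b ^ (-1 - 1/r) = r * ((1/r) * b ^ (-1 - 1/r)) := by field_simp
    _ ≤ r * ((b-1) ^ (-(1/r)) - b ^ (-(1/r))) := this
  calc ∑' i : ℕ, ENNReal.ofReal ((((n + 1 + i : ℕ) : ℝ) + s) ^ (-(1 + 1/r)))
      ≤ ∑' i : ℕ, ENNReal.ofReal (r * (F i - F (i+1))) :=
        ENNReal.tsum_le_tsum (fun i => ENNReal.ofReal_le_ofReal (step i))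
  _ ≤ ENNReal.ofReal (r * (((n : ℕ) : ℝ) + s) ^ (-(1/r))) := by
      rw [ENNReal.tsum_eq_iSup_nat]
      refine iSup_le (fun k => ?_)
      rw [← ENNReal.ofReal_sum_of_nonneg (fun i _ =>
        mul_nonneg hr0.le (by linarith [hFmono i]))]
      apply ENNReal.ofReal_le_ofReal
      rw [← Finset.mul_sum, Finset.sum_range_sub' F k]
      have e0 : F 0 = ((n:ℝ) + s) ^ (-(1/r)) := by simp [hF]
      rw [← e0]
      nlinarith [hFnn k, hFnn 0]

set_option maxHeartbeats 1000000 in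
lemma row_bound {s r : ℝ} (hs : 1 ≤ s) (hr : 1 < r) (n : ℕ) :
    ∑' j : ℕ, ENNReal.ofReal (1 / (max (n:ℝ) (j:ℝ) + s)) *
        ENNReal.ofReal (((j:ℝ) + s) ^ (-(1/r))) ≤
      ENNReal.ofReal (r + r/(r-1)) * ENNReal.ofReal (((n:ℝ) + s) ^ (-(1/r))) := by
  have hr0 : (0:ℝ) < r := by linarith
  have hr' : (0:ℝ) < r/(r-1) := by
    apply div_pos hr0; linarith
  have hns : (0:ℝ) < (n:ℝ) + s := by
    have : (0:ℝ) ≤ (n:ℝ) := Nat.cast_nonneg n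
    linarith
  set g : ℕ → ℝ≥0∞ := fun j => ENNReal.ofReal (1 / (max (n:ℝ) (j:ℝ) + s)) *
      ENNReal.ofReal (((j:ℝ) + s) ^ (-(1/r))) with hg
  have split : ∑' j, g j = ∑ j ∈ Finset.range (n+1), g j + ∑' i, g (i + (n+1)) :=
    (HasSum.sum_range_add (f := g) (k := n+1) ENNReal.summable.hasSum).tsum_eq
  rw [split]
  have head : ∑ j ∈ Finset.range (n+1), g j ≤
      ENNReal.ofReal (r/(r-1)) * ENNReal.ofReal (((n:ℝ) + s) ^ (-(1/r))) := by
    have hmax : ∀ j ∈ Finset.range (n+1), g j =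
        ENNReal.ofReal (1 / ((n:ℝ) + s)) * ENNReal.ofReal (((j:ℝ) + s) ^ (-(1/r))) := by
      intro j hj
      have hj' : (j:ℝ) ≤ (n:ℝ) := by
        exact_mod_cast Nat.lt_succ_iff.mp (Finset.mem_range.mp hj)
      simp only [hg]
      rw [max_eq_left hj']
    rw [Finset.sum_congr rfl hmax, ← Finset.mul_sum]
    rw [← ENNReal.ofReal_sum_of_nonneg (fun j _ => Real.rpow_nonneg (by positivity) _)]
    rw [← ENNReal.ofReal_mul (by positivity)]
    calc ENNReal.ofReal ((1/((n:ℝ)+s)) * ∑ j ∈ Finset.range (n+1), ((j:ℝ)+s)^(-(1/r)))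
        ≤ ENNReal.ofReal ((1/((n:ℝ)+s)) * ((r/(r-1)) * ((n:ℝ)+s)^(1-1/r))) :=
          ENNReal.ofReal_le_ofReal
            (mul_le_mul_of_nonneg_left (head_sum hs hr n) (by positivity))
    _ = ENNReal.ofReal (r/(r-1)) * ENNReal.ofReal (((n:ℝ) + s) ^ (-(1/r))) := by
        rw [← ENNReal.ofReal_mul hr'.le]
        congr 1
        have e : (1/((n:ℝ)+s)) * ((r/(r-1)) * ((n:ℝ)+s)^(1-1/r)) =
            (r/(r-1)) * (((n:ℝ)+s)^(1-1/r) / (((n:ℝ)+s)^(1:ℝ))) := by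
          rw [Real.rpow_one]; ring
        rw [e, ← Real.rpow_sub hns]
        norm_num
  have tail : ∑' i, g (i + (n+1)) ≤
      ENNReal.ofReal r * ENNReal.ofReal (((n:ℝ) + s) ^ (-(1/r))) := by
    have eq1 : ∀ i : ℕ, g (i + (n+1)) =
        ENNReal.ofReal ((((n + 1 + i : ℕ) : ℝ) + s) ^ (-(1 + 1/r))) := by
      intro i
      simp only [hg]
      have hcast : ((i + (n+1) : ℕ):ℝ) = ((n + 1 + i : ℕ):ℝ) := by push_cast; ring
      have hble : (n:ℝ) ≤ ((i + (n+1) : ℕ):ℝ) := by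
        push_cast; linarith [Nat.cast_nonneg (α := ℝ) i]
      rw [max_eq_right hble, hcast]
      have hbpos : (0:ℝ) < ((n + 1 + i : ℕ):ℝ) + s := by positivity
      rw [← ENNReal.ofReal_mul (by positivity)]
      congr 1
      rw [one_div, ← Real.rpow_neg_one (((n + 1 + i : ℕ):ℝ) + s),
        ← Real.rpow_add hbpos]
      congr 1; ring
    calc ∑' i, g (i + (n+1))
        = ∑' i : ℕ, ENNReal.ofReal ((((n + 1 + i : ℕ) : ℝ) + s) ^ (-(1 + 1/r))) :=
          tsum_congr eq1
    _ ≤ ENNReal.ofReal (r * (((n:ℕ) : ℝ) + s) ^ (-(1/r))) := tail_sum hs hr n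
    _ = ENNReal.ofReal r * ENNReal.ofReal (((n:ℝ) + s) ^ (-(1/r))) :=
          ENNReal.ofReal_mul hr0.le
  calc ∑ j ∈ Finset.range (n+1), g j + ∑' i, g (i + (n+1))
      ≤ ENNReal.ofReal (r/(r-1)) * ENNReal.ofReal (((n:ℝ) + s) ^ (-(1/r))) +
        ENNReal.ofReal r * ENNReal.ofReal (((n:ℝ) + s) ^ (-(1/r))) := add_le_add head tail
  _ = ENNReal.ofReal (r + r/(r-1)) * ENNReal.ofReal (((n:ℝ) + s) ^ (-(1/r))) := by
      rw [← add_mul, ← ENNReal.ofReal_add hr'.le hr0.le, add_comm (r/(r-1)) r]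

lemma tsum_holder {p q : ℝ} (hpq : Real.HolderConjugate p q) (f g : ℕ → ℝ≥0∞) :
    ∑' i, f i * g i ≤ (∑' i, f i ^ p) ^ (1/p) * (∑' i, g i ^ q) ^ (1/q) := by
  have h := ENNReal.lintegral_mul_le_Lp_mul_Lq (Measure.count (α := ℕ)) hpq
    (Measurable.of_discrete (f := f)).aemeasurable (Measurable.of_discrete (f := g)).aemeasurable
  simpa [lintegral_count] using h

lemma real_prod_eq {p q k B y : ℝ} (hpq : Real.HolderConjugate p q) (hk : 0 < k)
    (hB : 0 < B) (hy : 0 ≤ y) :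
    (k * B ^ (-(1/p))) ^ (1/q) * (k * (y ^ p * B ^ (1/q))) ^ (1/p) = k * y := by
  have hp0 : 0 < p := hpq.pos
  have hq0 : 0 < q := hpq.symm.pos
  have hBp : (0:ℝ) ≤ B ^ (-(1/p)) := Real.rpow_nonneg hB.le _
  have hBq : (0:ℝ) ≤ B ^ (1/q) := Real.rpow_nonneg hB.le _
  rw [Real.mul_rpow hk.le hBp, Real.mul_rpow hk.le (by positivity),
    Real.mul_rpow (by positivity) hBq,
    ← Real.rpow_mul hB.le, ← Real.rpow_mul hB.le, ← Real.rpow_mul hy]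
  have ek : k ^ (1/q) * k ^ (1/p) = k := by
    rw [← Real.rpow_add hk]
    have : 1/q + 1/p = 1 := by
      rw [one_div, one_div, add_comm]; exact hpq.inv_add_inv_eq_one
    rw [this, Real.rpow_one]
  have eB : B ^ (-(1/p) * (1/q)) * B ^ (1/q * (1/p)) = 1 := by
    rw [← Real.rpow_add hB]
    have : -(1/p) * (1/q) + 1/q * (1/p) = 0 := by ring
    rw [this, Real.rpow_zero]
  have ey : y ^ (p * (1/p)) = y := by
    have : p * (1/p) = 1 := by field_simp
    rw [this, Real.rpow_one]
  calc k ^ (1/q) * B ^ (-(1/p) * (1/q)) * (k ^ (1/p) * (y ^ (p * (1/p)) * B ^ (1/q * (1/p))))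
      = (k ^ (1/q) * k ^ (1/p)) * (B ^ (-(1/p) * (1/q)) * B ^ (1/q * (1/p))) * y ^ (p * (1/p)) := by
        ring
  _ = k * y := by rw [ek, eB, ey, mul_one]

/-- For `s ≥ 1`, `1 < p < ∞` and every real sequence `x` with `∑ |x_n|^p < ∞`,
`‖A_s x‖_p ≤ (p²/(p−1))‖x‖_p`, i.e.
`∑ₙ |∑ⱼ x_j/(max(n,j)+s)|^p ≤ (p²/(p−1))^p ∑ₙ |x_n|^p`. -/
theorem As_pnorm_le (s p : ℝ) (hs : 1 ≤ s) (hp : 1 < p)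
    (x : ℕ → ℝ) (hx : Summable fun n => |x n| ^ p) :
    ∑' n : ℕ, |∑' j : ℕ, x j / ((max n j : ℝ) + s)| ^ p ≤
      (p ^ 2 / (p - 1)) ^ p * ∑' n : ℕ, |x n| ^ p := by
  have hp0 : (0:ℝ) < p := by linarith
  set q : ℝ := p / (p - 1) with hq
  have hpq : p.HolderConjugate q := Real.HolderConjugate.conjExponent hp
  have hq1 : 1 < q := hpq.symm.lt
  have hq0 : (0:ℝ) < q := by linarith
  have hp1 : p - 1 ≠ 0 := sub_ne_zero.2 (ne_of_gt hp)
  have hCq : q + q / (q - 1) = p ^ 2 / (p - 1) := by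
    have h1 : q - 1 = 1 / (p - 1) := by rw [hq]; field_simp; ring
    rw [hq, h1]
    field_simp
    ring
  have hCp : p + p / (p - 1) = p ^ 2 / (p - 1) := by
    field_simp; ring
  have hCpos : (0:ℝ) < p ^ 2 / (p - 1) := by
    apply div_pos (by positivity); linarith
  have hB : ∀ j : ℕ, (0:ℝ) < (j:ℝ) + s := fun j => by
    have : (0:ℝ) ≤ (j:ℝ) := Nat.cast_nonneg j
    linarith
  have hKpos : ∀ n j : ℕ, (0:ℝ) < 1 / (max (n:ℝ) (j:ℝ) + s) := fun n j => by
    have h1 : (0:ℝ) ≤ (n:ℝ) := Nat.cast_nonneg n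
    have h2 : (0:ℝ) ≤ max (n:ℝ) (j:ℝ) := le_trans h1 (le_max_left _ _)
    positivity
  set K : ℕ → ℕ → ℝ≥0∞ := fun n j => ENNReal.ofReal (1 / (max (n:ℝ) (j:ℝ) + s)) with hK
  set a : ℕ → ℝ≥0∞ := fun j => ENNReal.ofReal |x j| with ha
  set u : ℕ → ℝ≥0∞ := fun j => ENNReal.ofReal (((j:ℝ) + s) ^ (-(1/p))) with hu
  set v : ℕ → ℝ≥0∞ := fun j => ENNReal.ofReal (((j:ℝ) + s) ^ (-(1/q))) with hv
  set T : ℕ → ℝ≥0∞ := fun j => ENNReal.ofReal (|x j| ^ p * ((j:ℝ) + s) ^ (1/q)) with hT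
  set C : ℝ≥0∞ := ENNReal.ofReal (p ^ 2 / (p - 1)) with hCE
  -- row and column bounds
  have hrow : ∀ n, ∑' j, K n j * u j ≤ C * u n := by
    intro n
    have h := row_bound (r := p) hs hp n
    rw [hCp] at h
    exact h
  have hcol : ∀ j, ∑' n, K n j * v n ≤ C * v j := by
    intro j
    have h := row_bound (r := q) hs hq1 j
    rw [hCq] at h
    calc ∑' n, K n j * v n
        = ∑' n : ℕ, ENNReal.ofReal (1 / (max (j:ℝ) (n:ℝ) + s)) *
            ENNReal.ofReal (((n:ℝ) + s) ^ (-(1/q))) := by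
          refine tsum_congr fun n => ?_
          simp only [hK, hv, max_comm (n:ℝ) (j:ℝ)]
    _ ≤ C * v j := h
  -- Hölder step
  have hhold : ∀ n, (∑' j, K n j * a j) ≤
      (∑' j, K n j * u j) ^ (1/q) * (∑' j, K n j * T j) ^ (1/p) := by
    intro n
    have h := tsum_holder hpq.symm (fun j => (K n j * u j) ^ (1/q))
      (fun j => (K n j * T j) ^ (1/p))
    have e1 : ∀ j, ((K n j * u j) ^ (1/q)) ^ q = K n j * u j := by
      intro j
      rw [← ENNReal.rpow_mul]
      rw [show (1/q) * q = 1 by field_simp, ENNReal.rpow_one]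
    have e2 : ∀ j, ((K n j * T j) ^ (1/p)) ^ p = K n j * T j := by
      intro j
      rw [← ENNReal.rpow_mul]
      rw [show (1/p) * p = 1 by field_simp, ENNReal.rpow_one]
    have e3 : ∀ j, ((K n j * u j) ^ (1/q)) * ((K n j * T j) ^ (1/p)) = K n j * a j := by
      intro j
      simp only [hK, hu, hT, ha]
      have hkn : (0:ℝ) ≤ 1 / (max (n:ℝ) (j:ℝ) + s) := (hKpos n j).le
      have he : (0:ℝ) ≤ ((j:ℝ) + s) ^ (-(1/p)) := Real.rpow_nonneg (hB j).le _
      have ht : (0:ℝ) ≤ |x j| ^ p * ((j:ℝ) + s) ^ (1/q) :=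
        mul_nonneg (Real.rpow_nonneg (abs_nonneg _) _) (Real.rpow_nonneg (hB j).le _)
      rw [← ENNReal.ofReal_mul hkn, ← ENNReal.ofReal_mul hkn,
        ENNReal.ofReal_rpow_of_nonneg (mul_nonneg hkn he) (by positivity),
        ENNReal.ofReal_rpow_of_nonneg (mul_nonneg hkn ht) (by positivity),
        ← ENNReal.ofReal_mul (Real.rpow_nonneg (mul_nonneg hkn he) _),
        ← ENNReal.ofReal_mul hkn]
      congr 1
      exact real_prod_eq hpq (hKpos n j) (hB j) (abs_nonneg _)
    calc ∑' j, K n j * a j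
        = ∑' j, ((K n j * u j) ^ (1/q)) * ((K n j * T j) ^ (1/p)) :=
          (tsum_congr e3).symm
    _ ≤ (∑' j, ((K n j * u j) ^ (1/q)) ^ q) ^ (1/q) *
        (∑' j, ((K n j * T j) ^ (1/p)) ^ p) ^ (1/p) := h
    _ = (∑' j, K n j * u j) ^ (1/q) * (∑' j, K n j * T j) ^ (1/p) := by
        rw [tsum_congr e1, tsum_congr e2]
  -- power relation between the weights
  have hpq_div : (0:ℝ) ≤ p / q := by positivity
  have huv : ∀ n, u n ^ (p/q) = v n := by
    intro n
    simp only [hu, hv]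
    rw [ENNReal.ofReal_rpow_of_nonneg (Real.rpow_nonneg (hB n).le _) hpq_div,
      ← Real.rpow_mul (hB n).le]
    congr 2
    field_simp
  have hpow : ∀ n, (∑' j, K n j * a j) ^ p ≤ C ^ (p/q) * (v n * ∑' j, K n j * T j) := by
    intro n
    calc (∑' j, K n j * a j) ^ p
        ≤ ((∑' j, K n j * u j) ^ (1/q) * (∑' j, K n j * T j) ^ (1/p)) ^ p :=
          ENNReal.rpow_le_rpow (hhold n) hp0.le
    _ = ((∑' j, K n j * u j) ^ (1/q)) ^ p * ((∑' j, K n j * T j) ^ (1/p)) ^ p :=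
          ENNReal.mul_rpow_of_nonneg _ _ hp0.le
    _ = (∑' j, K n j * u j) ^ (p/q) * (∑' j, K n j * T j) := by
          rw [← ENNReal.rpow_mul, ← ENNReal.rpow_mul]
          rw [show (1/q) * p = p/q by ring, show (1/p) * p = 1 by field_simp,
            ENNReal.rpow_one]
    _ ≤ (C * u n) ^ (p/q) * (∑' j, K n j * T j) :=
          mul_le_mul_left (ENNReal.rpow_le_rpow (hrow n) hpq_div) _
    _ = C ^ (p/q) * (v n * ∑' j, K n j * T j) := by
          rw [ENNReal.mul_rpow_of_nonneg _ _ hpq_div, huv n, mul_assoc]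
  have hTv : ∀ j, T j * v j = a j ^ p := by
    intro j
    simp only [hT, hv, ha]
    rw [← ENNReal.ofReal_mul (mul_nonneg (Real.rpow_nonneg (abs_nonneg _) _)
        (Real.rpow_nonneg (hB j).le _)),
      ENNReal.ofReal_rpow_of_nonneg (abs_nonneg _) hp0.le]
    congr 1
    rw [mul_assoc, ← Real.rpow_add (hB j)]
    rw [show (1/q) + -(1/q) = 0 by ring, Real.rpow_zero, mul_one]
  have hCne0 : C ≠ 0 := by
    rw [hCE]
    exact (ENNReal.ofReal_pos.mpr hCpos).ne'
  have hCnetop : C ≠ ⊤ := by rw [hCE]; exact ENNReal.ofReal_ne_top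
  have main : ∑' n, (∑' j, K n j * a j) ^ p ≤ C ^ p * ∑' j, a j ^ p := by
    calc ∑' n, (∑' j, K n j * a j) ^ p
        ≤ ∑' n, C ^ (p/q) * (v n * ∑' j, K n j * T j) := ENNReal.tsum_le_tsum hpow
    _ = C ^ (p/q) * ∑' n, ∑' j, v n * (K n j * T j) := by
        rw [ENNReal.tsum_mul_left]
        congr 1
        exact tsum_congr fun n => ENNReal.tsum_mul_left.symm
    _ = C ^ (p/q) * ∑' j, ∑' n, v n * (K n j * T j) := by rw [ENNReal.tsum_comm]
    _ = C ^ (p/q) * ∑' j, T j * ∑' n, K n j * v n := by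
        congr 1
        refine tsum_congr fun j => ?_
        rw [← ENNReal.tsum_mul_left]
        exact tsum_congr fun n => by ring
    _ ≤ C ^ (p/q) * ∑' j, T j * (C * v j) :=
        mul_le_mul_right (ENNReal.tsum_le_tsum fun j => mul_le_mul_right (hcol j) (T j)) _
    _ = C ^ (p/q) * (C * ∑' j, T j * v j) := by
        congr 1
        rw [← ENNReal.tsum_mul_left]
        exact tsum_congr fun j => by ring
    _ = C ^ (p/q) * C ^ (1:ℝ) * ∑' j, a j ^ p := by
        rw [tsum_congr hTv, ENNReal.rpow_one]
        ring
    _ = C ^ p * ∑' j, a j ^ p := by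
        rw [← ENNReal.rpow_add (p/q) 1 hCne0 hCnetop]
        congr 2
        rw [hpq.div_conj_eq_sub_one]
        ring
  have hX0 : 0 ≤ ∑' n, |x n| ^ p := tsum_nonneg fun n => Real.rpow_nonneg (abs_nonneg _) _
  have hsum_ap : ∑' j, a j ^ p = ENNReal.ofReal (∑' n, |x n| ^ p) := by
    rw [ENNReal.ofReal_tsum_of_nonneg (fun n => Real.rpow_nonneg (abs_nonneg _) _) hx]
    refine tsum_congr fun j => ?_
    simp only [ha]
    exact ENNReal.ofReal_rpow_of_nonneg (abs_nonneg _) hp0.le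
  have hRHS : C ^ p * ∑' j, a j ^ p =
      ENNReal.ofReal ((p^2/(p-1))^p * ∑' n, |x n| ^ p) := by
    rw [hCE, ENNReal.ofReal_rpow_of_pos hCpos, hsum_ap,
      ← ENNReal.ofReal_mul (Real.rpow_nonneg hCpos.le _)]
  have hpt : ∀ n : ℕ, ENNReal.ofReal (|∑' j, x j / (max (n:ℝ) (j:ℝ) + s)| ^ p) ≤
      (∑' j, K n j * a j) ^ p := by
    intro n
    have hdpos : ∀ j : ℕ, (0:ℝ) < max (n:ℝ) (j:ℝ) + s := by
      intro j
      have h1 : (0:ℝ) ≤ (n:ℝ) := Nat.cast_nonneg n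
      have h2 : (0:ℝ) ≤ max (n:ℝ) (j:ℝ) := le_trans h1 (le_max_left _ _)
      linarith
    have habs : ENNReal.ofReal |∑' j, x j / (max (n:ℝ) (j:ℝ) + s)| ≤ ∑' j, K n j * a j := by
      by_cases hsb : Summable fun j => x j / (max (n:ℝ) (j:ℝ) + s)
      · have habs2 : Summable fun j => |x j / (max (n:ℝ) (j:ℝ) + s)| := hsb.abs
        calc ENNReal.ofReal |∑' j, x j / (max (n:ℝ) (j:ℝ) + s)|
            ≤ ENNReal.ofReal (∑' j, |x j / (max (n:ℝ) (j:ℝ) + s)|) := by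
              apply ENNReal.ofReal_le_ofReal
              have h := norm_tsum_le_tsum_norm (f := fun j => x j / (max (n:ℝ) (j:ℝ) + s))
                (summable_norm_iff.mpr hsb)
              simp only [Real.norm_eq_abs] at h
              exact h
        _ = ∑' j, ENNReal.ofReal |x j / (max (n:ℝ) (j:ℝ) + s)| :=
              ENNReal.ofReal_tsum_of_nonneg (fun j => abs_nonneg _) habs2
        _ = ∑' j, K n j * a j := by
              refine tsum_congr fun j => ?_
              simp only [hK, ha]
              rw [← ENNReal.ofReal_mul (hKpos n j).le]
              congr 1
              rw [abs_div, abs_of_pos (hdpos j)]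
              ring
      · rw [tsum_eq_zero_of_not_summable hsb]
        simp
    calc ENNReal.ofReal (|∑' j, x j / (max (n:ℝ) (j:ℝ) + s)| ^ p)
        = ENNReal.ofReal |∑' j, x j / (max (n:ℝ) (j:ℝ) + s)| ^ p :=
          (ENNReal.ofReal_rpow_of_nonneg (abs_nonneg _) hp0.le).symm
    _ ≤ (∑' j, K n j * a j) ^ p := ENNReal.rpow_le_rpow habs hp0.le
  have hEt : ∑' n : ℕ, ENNReal.ofReal (|∑' j, x j / (max (n:ℝ) (j:ℝ) + s)| ^ p) ≤
      ENNReal.ofReal ((p^2/(p-1))^p * ∑' n, |x n| ^ p) := by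
    calc ∑' n : ℕ, ENNReal.ofReal (|∑' j, x j / (max (n:ℝ) (j:ℝ) + s)| ^ p)
        ≤ ∑' n, (∑' j, K n j * a j) ^ p := ENNReal.tsum_le_tsum hpt
    _ ≤ C ^ p * ∑' j, a j ^ p := main
    _ = _ := hRHS
  have hLnn : ∀ n : ℕ, 0 ≤ |∑' j, x j / (max (n:ℝ) (j:ℝ) + s)| ^ p :=
    fun n => Real.rpow_nonneg (abs_nonneg _) _
  have heq : ∑' n : ℕ, |∑' j, x j / (max (n:ℝ) (j:ℝ) + s)| ^ p =
      (∑' n : ℕ, ENNReal.ofReal (|∑' j, x j / (max (n:ℝ) (j:ℝ) + s)| ^ p)).toReal := by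
    rw [ENNReal.tsum_toReal_eq (fun n => ENNReal.ofReal_ne_top)]
    exact tsum_congr fun n => (ENNReal.toReal_ofReal (hLnn n)).symm
  rw [heq]
  calc (∑' n : ℕ, ENNReal.ofReal (|∑' j, x j / (max (n:ℝ) (j:ℝ) + s)| ^ p)).toReal
      ≤ (ENNReal.ofReal ((p^2/(p-1))^p * ∑' n, |x n| ^ p)).toReal :=
        ENNReal.toReal_mono ENNReal.ofReal_ne_top hEt
  _ = (p^2/(p-1))^p * ∑' n, |x n| ^ p :=
        ENNReal.toReal_ofReal (mul_nonneg (Real.rpow_nonneg hCpos.le _) hX0)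
end

section
/- Let N ≥ 2 be a fixed integer and let C be the lacunary C-matrix associated with N. Then the operator norm of C on ℓ² equals √(N−1)/(√N − 1): sup_{x≠0, x∈ℓ²} ‖Cx‖₂/‖x‖₂ = √(N−1)/(√N − 1). -/
noncomputable def lacCoef (N : ℕ) (n : ℕ) : ℝ :=
  ∑' j : ℕ, if n = N ^ (j + 1) then (Real.sqrt N ^ (j + 1))⁻¹ else 0

noncomputable def lacC (N : ℕ) (x : ℕ → ℝ) (n : ℕ) : ℝ :=
  lacCoef N n * ∑ j ∈ Finset.range (n + 1), x j

namespace LacAux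

open Finset

noncomputable def L (N : ℕ) : ℝ := Real.sqrt ((N : ℝ) - 1) / (Real.sqrt (N : ℝ) - 1)

variable {N : ℕ}

lemma one_lt_s (hN : 2 ≤ N) : 1 < Real.sqrt N := by
  have h1 : (1:ℝ) < N := by exact_mod_cast lt_of_lt_of_le one_lt_two hN
  nlinarith [Real.sq_sqrt (by linarith : (0:ℝ) ≤ (N:ℝ)), Real.sqrt_nonneg (N:ℝ)]

lemma s_sq (hN : 2 ≤ N) : Real.sqrt N ^ 2 = (N:ℝ) :=
  Real.sq_sqrt (by positivity)

lemma sqrtN1_pos (hN : 2 ≤ N) : 0 < Real.sqrt ((N:ℝ) - 1) := by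
  have : (1:ℝ) ≤ (N:ℝ) - 1 := by
    have : (2:ℝ) ≤ N := by exact_mod_cast hN
    linarith
  exact Real.sqrt_pos.mpr (by linarith)

lemma L_pos (hN : 2 ≤ N) : 0 < L N :=
  div_pos (sqrtN1_pos hN) (by linarith [one_lt_s hN])

lemma sqrtN1_eq (hN : 2 ≤ N) : Real.sqrt ((N:ℝ) - 1) = L N * (Real.sqrt N - 1) := by
  rw [L, div_mul_cancel₀]
  linarith [one_lt_s hN]

lemma L_sq (hN : 2 ≤ N) : L N ^ 2 = ((N:ℝ) - 1) / (Real.sqrt N - 1) ^ 2 := by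
  rw [L, div_pow, Real.sq_sqrt]
  have : (2:ℝ) ≤ N := by exact_mod_cast hN
  linarith

lemma coef_pow (hN : 2 ≤ N) (j : ℕ) :
    lacCoef N (N ^ (j + 1)) = (Real.sqrt N ^ (j + 1))⁻¹ := by
  rw [lacCoef, tsum_eq_single j, if_pos rfl]
  intro b' hb'
  rw [if_neg]
  intro h
  exact hb' (by simpa using (Nat.pow_right_injective hN h.symm))

lemma coef_not_pow (n : ℕ) (h : ∀ j, n ≠ N ^ (j + 1)) : lacCoef N n = 0 := by
  rw [lacCoef]
  have : (fun j : ℕ => if n = N ^ (j + 1) then (Real.sqrt N ^ (j + 1))⁻¹ else 0)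
      = fun _ => (0:ℝ) := funext fun j => if_neg (h j)
  rw [this, tsum_zero]

lemma sum_blocks (hN : 2 ≤ N) (y : ℕ → ℝ) :
    ∀ J, ∑ k ∈ range (N ^ J + 1), y k
      = (y 0 + y 1) + ∑ i ∈ range J, ∑ k ∈ Finset.Ico (N ^ i + 1) (N ^ (i + 1) + 1), y k := by
  intro J
  induction J with
  | zero => simp [Finset.sum_range_succ]
  | succ J ih =>
    have hle : N ^ J + 1 ≤ N ^ (J + 1) + 1 := by
      have := Nat.pow_le_pow_right (by omega : N > 0) (Nat.le_succ J)
      simpa using Nat.succ_le_succ this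
    rw [range_eq_Ico, ← Finset.sum_Ico_consecutive y (Nat.zero_le _) hle, ← range_eq_Ico, ih,
      Finset.sum_range_succ]
    ring

lemma block_card (hN : 2 ≤ N) (i : ℕ) :
    ((Finset.Ico (N ^ i + 1) (N ^ (i + 1) + 1)).card : ℝ) = (N:ℝ) ^ (i+1) - (N:ℝ) ^ i := by
  rw [Nat.card_Ico]
  have hle : N ^ i ≤ N ^ (i + 1) := Nat.pow_le_pow_right (by omega) (Nat.le_succ i)
  have : N ^ (i+1) + 1 - (N ^ i + 1) = N ^ (i+1) - N ^ i := by omega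
  rw [this, Nat.cast_sub hle]
  push_cast; ring

lemma block_cs (hN : 2 ≤ N) (x : ℕ → ℝ) (i : ℕ) :
    (∑ k ∈ Finset.Ico (N ^ i + 1) (N ^ (i + 1) + 1), x k) ^ 2
      ≤ ((N:ℝ) ^ (i+1) - (N:ℝ) ^ i) * ∑ k ∈ Finset.Ico (N ^ i + 1) (N ^ (i + 1) + 1), x k ^ 2 := by
  have := Finset.sum_mul_sq_le_sq_mul_sq (Finset.Ico (N ^ i + 1) (N ^ (i + 1) + 1))
    (fun _ => (1:ℝ)) x
  rw [← block_card hN i]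
  simpa using this

lemma geo_le (hN : 2 ≤ N) (J : ℕ) :
    ∑ j ∈ range J, ((Real.sqrt N)⁻¹) ^ (j + 1) ≤ 1 / (Real.sqrt N - 1) := by
  set s := Real.sqrt N with hs
  have hs1 : 1 < s := one_lt_s hN
  have hq1 : s⁻¹ < 1 := by
    rw [inv_lt_one_iff₀]; right; exact hs1
  have hq0 : 0 < s⁻¹ := by positivity
  have hgeom : ∑ j ∈ range J, (s⁻¹) ^ j ≤ 1 / (1 - s⁻¹) := by
    rw [geom_sum_eq (by linarith : s⁻¹ ≠ 1)]
    rw [show ((s⁻¹) ^ J - 1) / (s⁻¹ - 1) = (1 - (s⁻¹) ^ J) / (1 - s⁻¹) by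
      rw [← neg_sub ((s⁻¹)^J) 1, ← neg_sub (s⁻¹) 1, neg_div_neg_eq]]
    gcongr
    · have : 0 ≤ (s⁻¹) ^ J := by positivity
      linarith
  have heq : 1 / (1 - s⁻¹) * s⁻¹ = 1 / (s - 1) := by
    have hs0 : s ≠ 0 := by linarith
    have h1 : 1 - s⁻¹ ≠ 0 := by
      intro h; have : s⁻¹ = 1 := by linarith
      rw [this] at hq1; linarith
    have h2 : s - 1 ≠ 0 := by linarith
    field_simp
  calc ∑ j ∈ range J, (s⁻¹) ^ (j+1) = (∑ j ∈ range J, (s⁻¹) ^ j) * s⁻¹ := by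
        rw [Finset.sum_mul]; exact Finset.sum_congr rfl fun j _ => by rw [pow_succ]
    _ ≤ 1 / (1 - s⁻¹) * s⁻¹ := by
        apply mul_le_mul_of_nonneg_right hgeom (le_of_lt hq0)
    _ = 1 / (s - 1) := heq


lemma peel (f : ℕ → ℝ) (j : ℕ) :
    ∑ k ∈ range (j + 3), f k = f 0 + f 1 + ∑ i ∈ range (j + 1), f (i + 2) := by
  rw [Finset.sum_range_succ' f (j + 2), Finset.sum_range_succ' (fun k => f (k + 1)) (j + 1)]
  ring

lemma key_j (hN : 2 ≤ N) (x : ℕ → ℝ) (j : ℕ) :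
    ((Real.sqrt N)⁻¹ ^ (j + 1) * ∑ k ∈ range (N ^ (j + 1) + 1), x k) ^ 2
      ≤ L N * (2 / L N * (Real.sqrt N)⁻¹ ^ (j + 1) * (x 0 ^ 2 + x 1 ^ 2)
          + Real.sqrt ((N:ℝ) - 1) * ∑ i ∈ range (j + 1), (Real.sqrt N)⁻¹ ^ ((j - i) + 1)
              * ∑ k ∈ Finset.Ico (N ^ i + 1) (N ^ (i + 1) + 1), x k ^ 2) := by
  set s := Real.sqrt N with hsdef
  set q : ℝ := s⁻¹ with hqdef
  have hs1 : 1 < s := one_lt_s hN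
  have hs0 : (0:ℝ) < s := by linarith
  have hq0 : 0 < q := by positivity
  have hq1 : q < 1 := by rw [hqdef, inv_lt_one_iff₀]; right; exact hs1
  have hLpos : 0 < L N := L_pos hN
  have hNR : (0:ℝ) < (N:ℝ) - 1 := by
    have : (2:ℝ) ≤ N := by exact_mod_cast hN
    linarith
  have hsq1 : 0 < Real.sqrt ((N:ℝ) - 1) := sqrtN1_pos hN
  have hq2N : q ^ 2 * (N:ℝ) = 1 := by
    rw [hqdef, inv_pow, s_sq hN, inv_mul_cancel₀ (by linarith : (N:ℝ) ≠ 0)]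
  set T : ℕ → ℝ := fun i => ∑ k ∈ Finset.Ico (N ^ i + 1) (N ^ (i + 1) + 1), x k with hT
  set B : ℕ → ℝ := fun i => ∑ k ∈ Finset.Ico (N ^ i + 1) (N ^ (i + 1) + 1), x k ^ 2 with hB
  set w : ℕ → ℝ := fun k => match k with
    | 0 => q ^ (j + 1) * (L N / 2)
    | 1 => q ^ (j + 1) * (L N / 2)
    | (i + 2) => Real.sqrt ((N:ℝ) - 1) * q ^ ((j - i) + 1) with hw
  set t : ℕ → ℝ := fun k => match k with
    | 0 => q ^ (j + 1) * x 0
    | 1 => q ^ (j + 1) * x 1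
    | (i + 2) => q ^ (j + 1) * T i with ht
  have hwpos : ∀ k, 0 < w k := by
    intro k
    match k with
    | 0 => show 0 < q ^ (j+1) * (L N / 2); positivity
    | 1 => show 0 < q ^ (j+1) * (L N / 2); positivity
    | (i+2) => show 0 < Real.sqrt ((N:ℝ) - 1) * q ^ ((j - i) + 1); positivity
  have hsum_t : ∑ k ∈ range (j + 3), t k = q ^ (j + 1) * ∑ k ∈ range (N ^ (j + 1) + 1), x k := by
    rw [peel t j, sum_blocks hN x (j + 1)]
    show q^(j+1) * x 0 + q^(j+1) * x 1 + ∑ i ∈ range (j+1), q^(j+1) * T i = _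
    rw [← Finset.mul_sum]
    ring
  have cs : (∑ k ∈ range (j + 3), t k) ^ 2
      ≤ (∑ k ∈ range (j + 3), w k) * (∑ k ∈ range (j + 3), t k ^ 2 / w k) := by
    have h := Finset.sum_mul_sq_le_sq_mul_sq (range (j + 3))
      (fun k => Real.sqrt (w k)) (fun k => t k / Real.sqrt (w k))
    have e1 : ∀ k, Real.sqrt (w k) * (t k / Real.sqrt (w k)) = t k := fun k => by
      rw [mul_div_cancel₀]
      exact ne_of_gt (Real.sqrt_pos.mpr (hwpos k))
    have e2 : ∀ k, Real.sqrt (w k) ^ 2 = w k := fun k => Real.sq_sqrt (le_of_lt (hwpos k))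
    have e3 : ∀ k, (t k / Real.sqrt (w k)) ^ 2 = t k ^ 2 / w k := fun k => by
      rw [div_pow, e2]
    calc (∑ k ∈ range (j + 3), t k) ^ 2
        = (∑ k ∈ range (j + 3), Real.sqrt (w k) * (t k / Real.sqrt (w k))) ^ 2 := by
          congr 1; exact (Finset.sum_congr rfl fun k _ => (e1 k)).symm
      _ ≤ (∑ k ∈ range (j + 3), Real.sqrt (w k) ^ 2)
            * (∑ k ∈ range (j + 3), (t k / Real.sqrt (w k)) ^ 2) := h
      _ = (∑ k ∈ range (j + 3), w k) * (∑ k ∈ range (j + 3), t k ^ 2 / w k) := by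
          rw [Finset.sum_congr rfl fun k _ => e2 k, Finset.sum_congr rfl fun k _ => e3 k]
  have hW : ∑ k ∈ range (j + 3), w k = L N := by
    rw [peel w j]
    show q^(j+1) * (L N / 2) + q^(j+1) * (L N / 2)
        + ∑ i ∈ range (j+1), Real.sqrt ((N:ℝ) - 1) * q ^ ((j - i) + 1) = L N
    have hrefl : ∑ i ∈ range (j+1), q ^ ((j - i) + 1) = ∑ i ∈ range (j+1), q ^ (i + 1) := by
      have := Finset.sum_range_reflect (fun i => q ^ (i + 1)) (j + 1)
      simpa using this
    rw [← Finset.mul_sum, hrefl]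
    have hgs : ∑ i ∈ range (j+1), q ^ (i + 1) = ((q ^ (j+1) - 1) / (q - 1)) * q := by
      rw [← geom_sum_eq (by linarith : q ≠ 1) (j+1), Finset.sum_mul]
      exact Finset.sum_congr rfl fun i _ => (pow_succ q i)
    rw [hgs, sqrtN1_eq hN]
    have h1 : s - 1 ≠ 0 := by linarith
    have hq1' : q - 1 ≠ 0 := by linarith
    have hsq : (s - 1) * q = 1 - q := by
      rw [hqdef]
      field_simp
    have hGq : (q ^ (j+1) - 1) / (q - 1) * (q - 1) = q ^ (j+1) - 1 :=
      div_mul_cancel₀ _ hq1'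
    set G := (q ^ (j+1) - 1) / (q - 1) with hGdef
    linear_combination (-(L N)) * hGq + (L N * G) * hsq
  have hblockterm : ∀ i ∈ range (j + 1),
      t (i + 2) ^ 2 / w (i + 2) ≤ Real.sqrt ((N:ℝ) - 1) * q ^ ((j - i) + 1) * B i := by
    intro i hi
    have hij : i ≤ j := Nat.lt_succ_iff.mp (Finset.mem_range.mp hi)
    show (q^(j+1) * T i)^2 / (Real.sqrt ((N:ℝ) - 1) * q ^ ((j - i) + 1))
        ≤ Real.sqrt ((N:ℝ) - 1) * q ^ ((j - i) + 1) * B i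
    rw [div_le_iff₀ (by positivity)]
    have hTB : T i ^ 2 ≤ ((N:ℝ) ^ (i+1) - (N:ℝ) ^ i) * B i := block_cs hN x i
    have e1 : q ^ (j + 1) = q ^ ((j - i) + 1) * q ^ i := by
      rw [← pow_add]; congr 1; omega
    have e2 : (q ^ i) ^ 2 * (N:ℝ) ^ i = 1 := by
      rw [← pow_mul, Nat.mul_comm i 2, pow_mul, ← mul_pow, hq2N, one_pow]
    have hexp : (q ^ (j+1)) ^ 2 * ((N:ℝ) ^ (i+1) - (N:ℝ) ^ i)
        = ((N:ℝ) - 1) * (q ^ ((j - i) + 1)) ^ 2 := by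
      calc (q ^ (j+1)) ^ 2 * ((N:ℝ) ^ (i+1) - (N:ℝ) ^ i)
          = (q ^ ((j - i) + 1)) ^ 2 * (((q ^ i) ^ 2 * (N:ℝ) ^ i) * ((N:ℝ) - 1)) := by
            rw [e1]; ring
        _ = ((N:ℝ) - 1) * (q ^ ((j - i) + 1)) ^ 2 := by rw [e2]; ring
    have hBnn : 0 ≤ B i := Finset.sum_nonneg fun k _ => sq_nonneg _
    calc (q^(j+1) * T i)^2 = (q^(j+1))^2 * T i ^ 2 := by ring
      _ ≤ (q^(j+1))^2 * (((N:ℝ) ^ (i+1) - (N:ℝ) ^ i) * B i) := by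
          apply mul_le_mul_of_nonneg_left hTB (by positivity)
      _ = ((q ^ (j+1)) ^ 2 * ((N:ℝ) ^ (i+1) - (N:ℝ) ^ i)) * B i := by ring
      _ = (((N:ℝ) - 1) * (q ^ ((j - i) + 1)) ^ 2) * B i := by rw [hexp]
      _ = Real.sqrt ((N:ℝ) - 1) * q ^ ((j - i) + 1) * B i
            * (Real.sqrt ((N:ℝ) - 1) * q ^ ((j - i) + 1)) := by
          have h5 : Real.sqrt ((N:ℝ) - 1) * Real.sqrt ((N:ℝ) - 1) = (N:ℝ) - 1 :=
            Real.mul_self_sqrt (le_of_lt hNR)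
          rw [show Real.sqrt ((N:ℝ) - 1) * q ^ ((j - i) + 1) * B i
              * (Real.sqrt ((N:ℝ) - 1) * q ^ ((j - i) + 1))
              = (Real.sqrt ((N:ℝ) - 1) * Real.sqrt ((N:ℝ) - 1))
                * ((q ^ ((j - i) + 1)) ^ 2 * B i) by ring, h5]
          ring
  have hD : ∑ k ∈ range (j + 3), t k ^ 2 / w k
      ≤ 2 / L N * q ^ (j + 1) * (x 0 ^ 2 + x 1 ^ 2)
        + Real.sqrt ((N:ℝ) - 1) * ∑ i ∈ range (j + 1), q ^ ((j - i) + 1) * B i := by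
    rw [peel (fun k => t k ^ 2 / w k) j]
    have h0 : t 0 ^ 2 / w 0 = 2 / L N * q ^ (j+1) * x 0 ^ 2 := by
      show (q^(j+1) * x 0)^2 / (q^(j+1) * (L N / 2)) = _
      have hqj : q ^ (j+1) ≠ 0 := by positivity
      field_simp
    have h1 : t 1 ^ 2 / w 1 = 2 / L N * q ^ (j+1) * x 1 ^ 2 := by
      show (q^(j+1) * x 1)^2 / (q^(j+1) * (L N / 2)) = _
      have hqj : q ^ (j+1) ≠ 0 := by positivity
      field_simp
    rw [h0, h1, Finset.mul_sum]
    have := Finset.sum_le_sum hblockterm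
    calc 2 / L N * q ^ (j+1) * x 0 ^ 2 + 2 / L N * q ^ (j+1) * x 1 ^ 2
          + ∑ i ∈ range (j+1), t (i+2) ^ 2 / w (i+2)
        ≤ 2 / L N * q ^ (j+1) * x 0 ^ 2 + 2 / L N * q ^ (j+1) * x 1 ^ 2
          + ∑ i ∈ range (j+1), Real.sqrt ((N:ℝ) - 1) * q ^ ((j - i) + 1) * B i := by
          linarith
      _ = 2 / L N * q ^ (j+1) * (x 0 ^ 2 + x 1 ^ 2)
          + ∑ i ∈ range (j+1), Real.sqrt ((N:ℝ) - 1) * (q ^ ((j - i) + 1) * B i) := by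
          rw [Finset.sum_congr rfl fun i _ => (mul_assoc _ _ _)]
          ring
  calc (q ^ (j + 1) * ∑ k ∈ range (N ^ (j + 1) + 1), x k) ^ 2
      = (∑ k ∈ range (j + 3), t k) ^ 2 := by rw [hsum_t]
    _ ≤ (∑ k ∈ range (j + 3), w k) * (∑ k ∈ range (j + 3), t k ^ 2 / w k) := cs
    _ = L N * (∑ k ∈ range (j + 3), t k ^ 2 / w k) := by rw [hW]
    _ ≤ L N * (2 / L N * q ^ (j + 1) * (x 0 ^ 2 + x 1 ^ 2)
          + Real.sqrt ((N:ℝ) - 1) * ∑ i ∈ range (j + 1), q ^ ((j - i) + 1) * B i) := by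
        apply mul_le_mul_of_nonneg_left hD (le_of_lt hLpos)


lemma main_upper (hN : 2 ≤ N) (x : ℕ → ℝ) (hx : Summable fun n => x n ^ 2) (J : ℕ) :
    ∑ j ∈ range J, ((Real.sqrt N)⁻¹ ^ (j + 1) * ∑ k ∈ range (N ^ (j + 1) + 1), x k) ^ 2
      ≤ L N ^ 2 * ∑' n, x n ^ 2 := by
  set s := Real.sqrt N with hsdef
  set q : ℝ := s⁻¹ with hqdef
  have hs1 : 1 < s := one_lt_s hN
  have hLpos : 0 < L N := L_pos hN
  set B : ℕ → ℝ := fun i => ∑ k ∈ Finset.Ico (N ^ i + 1) (N ^ (i + 1) + 1), x k ^ 2 with hB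
  have hBnn : ∀ i, 0 ≤ B i := fun i => Finset.sum_nonneg fun k _ => sq_nonneg _
  have step1 : ∑ j ∈ range J, (q ^ (j + 1) * ∑ k ∈ range (N ^ (j + 1) + 1), x k) ^ 2
      ≤ ∑ j ∈ range J, (L N * (2 / L N * q ^ (j + 1) * (x 0 ^ 2 + x 1 ^ 2))
          + L N * (Real.sqrt ((N:ℝ) - 1) * ∑ i ∈ range (j + 1), q ^ ((j - i) + 1) * B i)) := by
    apply Finset.sum_le_sum
    intro j _
    have := key_j hN x j
    rw [mul_add] at this
    exact this
  have hsplit : ∑ j ∈ range J, (L N * (2 / L N * q ^ (j + 1) * (x 0 ^ 2 + x 1 ^ 2))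
          + L N * (Real.sqrt ((N:ℝ) - 1) * ∑ i ∈ range (j + 1), q ^ ((j - i) + 1) * B i))
      = (∑ j ∈ range J, 2 * q ^ (j + 1) * (x 0 ^ 2 + x 1 ^ 2))
        + L N * Real.sqrt ((N:ℝ) - 1)
          * ∑ j ∈ range J, ∑ i ∈ range (j + 1), q ^ ((j - i) + 1) * B i := by
    rw [Finset.sum_add_distrib]
    congr 1
    · apply Finset.sum_congr rfl
      intro j _
      field_simp
    · rw [Finset.mul_sum]
      apply Finset.sum_congr rfl
      intro j _
      ring
  have hterm1 : ∑ j ∈ range J, 2 * q ^ (j + 1) * (x 0 ^ 2 + x 1 ^ 2)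
      ≤ L N ^ 2 * (x 0 ^ 2 + x 1 ^ 2) := by
    have h01 : (0:ℝ) ≤ x 0 ^ 2 + x 1 ^ 2 := by positivity
    have hsum : ∑ j ∈ range J, 2 * q ^ (j + 1) * (x 0 ^ 2 + x 1 ^ 2)
        = (∑ j ∈ range J, q ^ (j + 1)) * (2 * (x 0 ^ 2 + x 1 ^ 2)) := by
      rw [Finset.sum_mul]
      apply Finset.sum_congr rfl
      intro j _
      ring
    rw [hsum]
    have hg := geo_le hN J
    have h2L : 2 * (1 / (s - 1)) ≤ L N ^ 2 := by
      rw [L_sq hN]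
      rw [show 2 * (1 / (s - 1)) = 2 / (s - 1) by ring]
      rw [div_le_div_iff₀ (by linarith) (by nlinarith)]
      nlinarith [s_sq hN]
    calc (∑ j ∈ range J, q ^ (j + 1)) * (2 * (x 0 ^ 2 + x 1 ^ 2))
        ≤ (1 / (s - 1)) * (2 * (x 0 ^ 2 + x 1 ^ 2)) := by
          apply mul_le_mul_of_nonneg_right hg (by positivity)
      _ = (2 * (1 / (s - 1))) * (x 0 ^ 2 + x 1 ^ 2) := by ring
      _ ≤ L N ^ 2 * (x 0 ^ 2 + x 1 ^ 2) := mul_le_mul_of_nonneg_right h2L h01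
  have hswap : ∑ j ∈ range J, ∑ i ∈ range (j + 1), q ^ ((j - i) + 1) * B i
      ≤ (1 / (s - 1)) * ∑ i ∈ range J, B i := by
    have hrow : ∀ j ∈ range J, ∑ i ∈ range (j + 1), q ^ ((j - i) + 1) * B i
        = ∑ i ∈ range J, if i ≤ j then q ^ ((j - i) + 1) * B i else 0 := by
      intro j hj
      have hjJ : j < J := Finset.mem_range.mp hj
      have hfil : Finset.filter (fun i => i ≤ j) (range J) = range (j + 1) := by
        ext i
        simp only [Finset.mem_filter, Finset.mem_range, Nat.lt_succ_iff]
        omega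
      rw [← hfil, Finset.sum_filter]
    rw [Finset.sum_congr rfl hrow, Finset.sum_comm]
    have hcol : ∀ i ∈ range J, ∑ j ∈ range J, (if i ≤ j then q ^ ((j - i) + 1) * B i else 0)
        ≤ (1 / (s - 1)) * B i := by
      intro i _
      have hfil : Finset.filter (fun j => i ≤ j) (range J) = Finset.Ico i J := by
        ext j
        simp only [Finset.mem_filter, Finset.mem_range, Finset.mem_Ico]
        omega
      rw [← Finset.sum_filter, hfil, Finset.sum_Ico_eq_sum_range]
      have hterm : ∀ k ∈ range (J - i), q ^ (((i + k) - i) + 1) * B i = q ^ (k + 1) * B i := by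
        intro k _
        congr 2
        omega
      rw [Finset.sum_congr rfl hterm, ← Finset.sum_mul]
      exact mul_le_mul_of_nonneg_right (geo_le hN (J - i)) (hBnn i)
    calc ∑ i ∈ range J, ∑ j ∈ range J, (if i ≤ j then q ^ ((j - i) + 1) * B i else 0)
        ≤ ∑ i ∈ range J, (1 / (s - 1)) * B i := Finset.sum_le_sum hcol
      _ = (1 / (s - 1)) * ∑ i ∈ range J, B i := by rw [Finset.mul_sum]
  have hLL : L N * Real.sqrt ((N:ℝ) - 1) * (1 / (s - 1)) = L N ^ 2 := by
    rw [L, hsdef]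
    ring
  have hterm2 : L N * Real.sqrt ((N:ℝ) - 1)
        * ∑ j ∈ range J, ∑ i ∈ range (j + 1), q ^ ((j - i) + 1) * B i
      ≤ L N ^ 2 * ∑ i ∈ range J, B i := by
    have hnn : 0 ≤ L N * Real.sqrt ((N:ℝ) - 1) := by
      have := sqrtN1_pos hN
      positivity
    calc L N * Real.sqrt ((N:ℝ) - 1)
          * ∑ j ∈ range J, ∑ i ∈ range (j + 1), q ^ ((j - i) + 1) * B i
        ≤ L N * Real.sqrt ((N:ℝ) - 1) * ((1 / (s - 1)) * ∑ i ∈ range J, B i) :=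
          mul_le_mul_of_nonneg_left hswap hnn
      _ = (L N * Real.sqrt ((N:ℝ) - 1) * (1 / (s - 1))) * ∑ i ∈ range J, B i := by ring
      _ = L N ^ 2 * ∑ i ∈ range J, B i := by rw [hLL]
  have hfinal : (x 0 ^ 2 + x 1 ^ 2) + ∑ i ∈ range J, B i ≤ ∑' n, x n ^ 2 := by
    have hdec := sum_blocks hN (fun k => x k ^ 2) J
    have : (x 0 ^ 2 + x 1 ^ 2) + ∑ i ∈ range J, B i
        = ∑ k ∈ range (N ^ J + 1), x k ^ 2 := by rw [hdec]
    rw [this]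
    exact Summable.sum_le_tsum _ (fun k _ => sq_nonneg _) hx
  calc ∑ j ∈ range J, (q ^ (j + 1) * ∑ k ∈ range (N ^ (j + 1) + 1), x k) ^ 2
      ≤ (∑ j ∈ range J, 2 * q ^ (j + 1) * (x 0 ^ 2 + x 1 ^ 2))
        + L N * Real.sqrt ((N:ℝ) - 1)
          * ∑ j ∈ range J, ∑ i ∈ range (j + 1), q ^ ((j - i) + 1) * B i := by
        rw [← hsplit]; exact step1
    _ ≤ L N ^ 2 * (x 0 ^ 2 + x 1 ^ 2) + L N ^ 2 * ∑ i ∈ range J, B i := by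
        linarith [hterm1, hterm2]
    _ = L N ^ 2 * ((x 0 ^ 2 + x 1 ^ 2) + ∑ i ∈ range J, B i) := by ring
    _ ≤ L N ^ 2 * ∑' n, x n ^ 2 := mul_le_mul_of_nonneg_left hfinal (by positivity)

lemma e_inj (hN : 2 ≤ N) : Function.Injective (fun j : ℕ => N ^ (j + 1)) := by
  intro a b h
  have := Nat.pow_right_injective hN (h : N ^ (a + 1) = N ^ (b + 1))
  omega

lemma F_supp0 (x : ℕ → ℝ) :
    ∀ n ∉ Set.range (fun j : ℕ => N ^ (j + 1)), (lacC N x n) ^ 2 = 0 := by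
  intro n hn
  have hnp : ∀ j, n ≠ N ^ (j + 1) := fun j hj => hn ⟨j, hj.symm⟩
  simp [lacC, coef_not_pow n hnp]

lemma F_comp (hN : 2 ≤ N) (x : ℕ → ℝ) (j : ℕ) :
    (lacC N x (N ^ (j + 1))) ^ 2
      = ((Real.sqrt N)⁻¹ ^ (j + 1) * ∑ k ∈ range (N ^ (j + 1) + 1), x k) ^ 2 := by
  simp only [lacC, coef_pow hN j, inv_pow]

lemma Q_bound (hN : 2 ≤ N) (x : ℕ → ℝ) (hx : Summable fun n => x n ^ 2) :
    Summable (fun n => (lacC N x n) ^ 2) ∧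
      ∑' n, (lacC N x n) ^ 2 ≤ L N ^ 2 * ∑' n, x n ^ 2 := by
  set F : ℕ → ℝ := fun n => (lacC N x n) ^ 2 with hF
  set e : ℕ → ℕ := fun j => N ^ (j + 1) with he
  have hinj : Function.Injective e := e_inj hN
  have hsupp0 : ∀ n ∉ Set.range e, F n = 0 := F_supp0 x
  have hcomp : ∀ j, (F ∘ e) j
      = ((Real.sqrt N)⁻¹ ^ (j + 1) * ∑ k ∈ range (N ^ (j + 1) + 1), x k) ^ 2 :=
    fun j => F_comp hN x j
  have hle : ∀ J, ∑ j ∈ range J, (F ∘ e) j ≤ L N ^ 2 * ∑' n, x n ^ 2 := by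
    intro J
    rw [Finset.sum_congr rfl fun j _ => hcomp j]
    exact main_upper hN x hx J
  have hsummc : Summable (F ∘ e) :=
    summable_of_sum_range_le (fun j => by rw [hcomp]; positivity) hle
  have hsumm : Summable F := (hinj.summable_iff hsupp0).mp hsummc
  refine ⟨hsumm, ?_⟩
  have hsupp : Function.support F ⊆ Set.range e := by
    intro n hn
    by_contra h
    exact hn (hsupp0 n h)
  rw [← hinj.tsum_eq hsupp]
  exact Summable.tsum_le_of_sum_range_le hsummc hle


lemma sqrt_pow_nat {N : ℕ} (i : ℕ) : Real.sqrt ((N:ℝ) ^ i) = Real.sqrt N ^ i := by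
  induction i with
  | zero => simp
  | succ i ih => rw [pow_succ, pow_succ, Real.sqrt_mul (by positivity), ih]

lemma lower (hN : 2 ≤ N) (m : ℕ) (hm : 1 ≤ m) :
    ∃ x : ℕ → ℝ, Summable (fun n => x n ^ 2) ∧ x ≠ 0 ∧
      (∑' n, x n ^ 2) = (m : ℝ) ∧
      L N ^ 2 * m - 2 * L N ^ 2 / (Real.sqrt N - 1) ≤ ∑' n, (lacC N x n) ^ 2 := by
  have hs1 : 1 < Real.sqrt N := one_lt_s hN
  have hLpos : 0 < L N := L_pos hN
  have hNpos : 0 < N := by omega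
  have hN1R : (1:ℝ) < (N:ℝ) := by exact_mod_cast (by omega : 1 < N)
  set d : ℕ → ℝ := fun i => (N:ℝ) ^ (i + 1) - (N:ℝ) ^ i with hddef
  have hd : ∀ i, 0 < d i := by
    intro i
    have h : d i = (N:ℝ) ^ i * ((N:ℝ) - 1) := by rw [hddef]; ring
    rw [h]
    exact mul_pos (by positivity) (by linarith)
  set x : ℕ → ℝ := fun k =>
    if 2 ≤ k ∧ k ≤ N ^ m then (Real.sqrt (d (Nat.log N (k - 1))))⁻¹ else 0 with hxdef
  have hblockval : ∀ i, i < m → ∀ k ∈ Finset.Ico (N ^ i + 1) (N ^ (i + 1) + 1),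
      x k = (Real.sqrt (d i))⁻¹ := by
    intro i him k hk
    obtain ⟨hk1, hk2⟩ := Finset.mem_Ico.mp hk
    have hNi : 1 ≤ N ^ i := Nat.one_le_pow _ _ hNpos
    have h2k : 2 ≤ k := by omega
    have hkN : k ≤ N ^ m := by
      have h2 : N ^ (i + 1) ≤ N ^ m := Nat.pow_le_pow_right hNpos (by omega)
      omega
    have hlog : Nat.log N (k - 1) = i :=
      Nat.log_eq_of_pow_le_of_lt_pow (by omega) (by omega)
    simp only [hxdef]
    rw [if_pos (And.intro h2k hkN), hlog]
  have h0 : x 0 = 0 := by simp [hxdef]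
  have h1 : x 1 = 0 := by simp [hxdef]
  have hout : ∀ k ∉ range (N ^ m + 1), x k = 0 := by
    intro k hk
    have hgt : ¬ k < N ^ m + 1 := fun h => hk (Finset.mem_range.mpr h)
    simp only [hxdef]
    rw [if_neg]
    rintro ⟨-, h2⟩
    omega
  have houtsq : ∀ k ∉ range (N ^ m + 1), x k ^ 2 = 0 := by
    intro k hk; rw [hout k hk]; norm_num
  have hxsq_sum : Summable (fun n => x n ^ 2) := summable_of_ne_finset_zero houtsq
  have hBi : ∀ i, i < m →
      ∑ k ∈ Finset.Ico (N ^ i + 1) (N ^ (i + 1) + 1), x k ^ 2 = 1 := by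
    intro i him
    rw [Finset.sum_congr rfl (fun k hk => by rw [hblockval i him k hk])]
    rw [Finset.sum_const, nsmul_eq_mul, block_card hN i]
    have hsq : ((Real.sqrt (d i))⁻¹) ^ 2 = (d i)⁻¹ := by
      rw [inv_pow, Real.sq_sqrt (le_of_lt (hd i))]
    have hdi : (N:ℝ) ^ (i+1) - (N:ℝ) ^ i = d i := rfl
    rw [hdi, hsq, mul_inv_cancel₀ (ne_of_gt (hd i))]
  have hP : ∑' n, x n ^ 2 = (m : ℝ) := by
    rw [tsum_eq_sum houtsq, sum_blocks hN (fun k => x k ^ 2) m]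
    have hx0 : x 0 ^ 2 = 0 := by rw [h0]; norm_num
    have hx1 : x 1 ^ 2 = 0 := by rw [h1]; norm_num
    rw [hx0, hx1,
      Finset.sum_congr rfl (fun i hi => hBi i (Finset.mem_range.mp hi))]
    simp
  have hxne : x ≠ 0 := by
    have h2m : 2 ∈ Finset.Ico (N ^ 0 + 1) (N ^ (0 + 1) + 1) := by
      rw [Finset.mem_Ico]
      refine ⟨by norm_num, ?_⟩
      simp only [zero_add, pow_one]
      omega
    have hx2 : x 2 = (Real.sqrt (d 0))⁻¹ := hblockval 0 hm 2 h2m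
    have hx2ne : x 2 ≠ 0 := by
      rw [hx2]
      exact inv_ne_zero (ne_of_gt (Real.sqrt_pos.mpr (hd 0)))
    intro h
    exact hx2ne (by rw [h]; rfl)
  have hT : ∀ i, i < m → ∑ k ∈ Finset.Ico (N ^ i + 1) (N ^ (i + 1) + 1), x k
      = Real.sqrt ((N:ℝ) - 1) * Real.sqrt N ^ i := by
    intro i him
    rw [Finset.sum_congr rfl (fun k hk => by rw [hblockval i him k hk])]
    rw [Finset.sum_const, nsmul_eq_mul, block_card hN i]
    have hdi : (N:ℝ) ^ (i+1) - (N:ℝ) ^ i = d i := rfl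
    have hmul : d i * (Real.sqrt (d i))⁻¹ = Real.sqrt (d i) := by
      nth_rewrite 1 [show d i = Real.sqrt (d i) * Real.sqrt (d i) from
        (Real.mul_self_sqrt (le_of_lt (hd i))).symm]
      rw [mul_assoc, mul_inv_cancel₀ (ne_of_gt (Real.sqrt_pos.mpr (hd i))), mul_one]
    rw [hdi, hmul]
    have h : d i = (N:ℝ) ^ i * ((N:ℝ) - 1) := by rw [hddef]; ring
    rw [h, Real.sqrt_mul (by positivity), sqrt_pow_nat]
    ring
  have hS : ∀ j, j < m → ∑ k ∈ range (N ^ (j + 1) + 1), x k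
      = Real.sqrt ((N:ℝ) - 1) * ((Real.sqrt N ^ (j + 1) - 1) / (Real.sqrt N - 1)) := by
    intro j hjm
    rw [sum_blocks hN x (j + 1), h0, h1]
    have hrw : ∑ i ∈ range (j + 1), ∑ k ∈ Finset.Ico (N ^ i + 1) (N ^ (i + 1) + 1), x k
        = ∑ i ∈ range (j + 1), Real.sqrt ((N:ℝ) - 1) * Real.sqrt N ^ i := by
      apply Finset.sum_congr rfl
      intro i hi
      exact hT i (by have := Finset.mem_range.mp hi; omega)
    rw [hrw, ← Finset.mul_sum, geom_sum_eq (ne_of_gt hs1) (j + 1)]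
    ring
  refine ⟨x, hxsq_sum, hxne, hP, ?_⟩
  obtain ⟨hsummF, -⟩ := Q_bound hN x hxsq_sum
  have hinj : Function.Injective (fun j : ℕ => N ^ (j + 1)) := e_inj hN
  have hsupp : Function.support (fun n => (lacC N x n) ^ 2)
      ⊆ Set.range (fun j : ℕ => N ^ (j + 1)) := by
    intro n hn; by_contra h; exact hn (F_supp0 x n h)
  have hcompsum : Summable ((fun n => (lacC N x n) ^ 2) ∘ (fun j : ℕ => N ^ (j + 1))) :=
    hsummF.comp_injective hinj
  have hper : ∀ j, j < m → L N ^ 2 * (1 - 2 * (Real.sqrt N)⁻¹ ^ (j + 1))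
      ≤ (lacC N x (N ^ (j + 1))) ^ 2 := by
    intro j hjm
    have ha0 : (0:ℝ) < (Real.sqrt N)⁻¹ ^ (j + 1) := by positivity
    have hprod : (Real.sqrt N)⁻¹ ^ (j + 1) * Real.sqrt N ^ (j + 1) = 1 := by
      rw [← mul_pow, inv_mul_cancel₀ (by linarith : Real.sqrt N ≠ 0), one_pow]
    have h2 : (Real.sqrt N)⁻¹ ^ (j + 1) * (Real.sqrt N ^ (j + 1) - 1)
        = 1 - (Real.sqrt N)⁻¹ ^ (j + 1) := by
      rw [mul_sub, hprod]; ring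
    have hinner : (Real.sqrt N)⁻¹ ^ (j + 1)
          * (Real.sqrt ((N:ℝ) - 1) * ((Real.sqrt N ^ (j + 1) - 1) / (Real.sqrt N - 1)))
        = L N * (1 - (Real.sqrt N)⁻¹ ^ (j + 1)) := by
      calc (Real.sqrt N)⁻¹ ^ (j + 1)
            * (Real.sqrt ((N:ℝ) - 1) * ((Real.sqrt N ^ (j + 1) - 1) / (Real.sqrt N - 1)))
          = Real.sqrt ((N:ℝ) - 1)
            * (((Real.sqrt N)⁻¹ ^ (j + 1) * (Real.sqrt N ^ (j + 1) - 1)) / (Real.sqrt N - 1)) := by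
            ring
        _ = Real.sqrt ((N:ℝ) - 1)
            * ((1 - (Real.sqrt N)⁻¹ ^ (j + 1)) / (Real.sqrt N - 1)) := by rw [h2]
        _ = L N * (1 - (Real.sqrt N)⁻¹ ^ (j + 1)) := by rw [L]; ring
    have hFe : (lacC N x (N ^ (j + 1))) ^ 2
        = (L N * (1 - (Real.sqrt N)⁻¹ ^ (j + 1))) ^ 2 := by
      rw [F_comp hN x j, hS j hjm, hinner]
    rw [hFe]
    nlinarith [sq_nonneg (L N * (Real.sqrt N)⁻¹ ^ (j + 1))]
  have hsum_lower : ∑ j ∈ range m, (L N ^ 2 * (1 - 2 * (Real.sqrt N)⁻¹ ^ (j + 1)))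
      ≤ ∑ j ∈ range m, (lacC N x (N ^ (j + 1))) ^ 2 :=
    Finset.sum_le_sum (fun j hj => hper j (Finset.mem_range.mp hj))
  have hgeo := geo_le hN m
  have hexp : ∑ j ∈ range m, (L N ^ 2 * (1 - 2 * (Real.sqrt N)⁻¹ ^ (j + 1)))
      = L N ^ 2 * m - 2 * L N ^ 2 * ∑ j ∈ range m, (Real.sqrt N)⁻¹ ^ (j + 1) := by
    rw [Finset.sum_congr rfl (fun j _ => by
      show L N ^ 2 * (1 - 2 * (Real.sqrt N)⁻¹ ^ (j + 1))
          = L N ^ 2 - 2 * L N ^ 2 * (Real.sqrt N)⁻¹ ^ (j + 1)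
      ring)]
    rw [Finset.sum_sub_distrib, Finset.sum_const, Finset.card_range, ← Finset.mul_sum]
    simp [nsmul_eq_mul]
    ring
  have hLHS : L N ^ 2 * m - 2 * L N ^ 2 / (Real.sqrt N - 1)
      ≤ ∑ j ∈ range m, (L N ^ 2 * (1 - 2 * (Real.sqrt N)⁻¹ ^ (j + 1))) := by
    rw [hexp]
    have hmono : 2 * L N ^ 2 * ∑ j ∈ range m, (Real.sqrt N)⁻¹ ^ (j + 1)
        ≤ 2 * L N ^ 2 * (1 / (Real.sqrt N - 1)) :=
      mul_le_mul_of_nonneg_left hgeo (by positivity)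
    have h2 : 2 * L N ^ 2 * (1 / (Real.sqrt N - 1)) = 2 * L N ^ 2 / (Real.sqrt N - 1) := by
      ring
    linarith
  have hsum_le_tsum : ∑ j ∈ range m, (lacC N x (N ^ (j + 1))) ^ 2
      ≤ ∑' j : ℕ, (lacC N x (N ^ (j + 1))) ^ 2 :=
    Summable.sum_le_tsum _ (fun j _ => sq_nonneg _) hcompsum
  have heq : ∑' j : ℕ, (lacC N x (N ^ (j + 1))) ^ 2 = ∑' n, (lacC N x n) ^ 2 :=
    hinj.tsum_eq hsupp
  calc L N ^ 2 * m - 2 * L N ^ 2 / (Real.sqrt N - 1)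
      ≤ ∑ j ∈ range m, (L N ^ 2 * (1 - 2 * (Real.sqrt N)⁻¹ ^ (j + 1))) := hLHS
    _ ≤ ∑ j ∈ range m, (lacC N x (N ^ (j + 1))) ^ 2 := hsum_lower
    _ ≤ ∑' j : ℕ, (lacC N x (N ^ (j + 1))) ^ 2 := hsum_le_tsum
    _ = ∑' n, (lacC N x n) ^ 2 := heq

end LacAux

/-- For `N ≥ 2`, the operator norm of the lacunary `C`-matrix on `ℓ²` equals
`√(N−1)/(√N − 1)`. -/
theorem lacC_opNorm (N : ℕ) (hN : 2 ≤ N) :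
    sSup { r : ℝ | ∃ x : ℕ → ℝ, Summable (fun n => (x n) ^ 2) ∧ x ≠ 0 ∧
        r = Real.sqrt (∑' n : ℕ, (lacC N x n) ^ 2) /
            Real.sqrt (∑' n : ℕ, (x n) ^ 2) } =
      Real.sqrt ((N : ℝ) - 1) / (Real.sqrt (N : ℝ) - 1) := by
  have hLdef : Real.sqrt ((N : ℝ) - 1) / (Real.sqrt (N : ℝ) - 1) = LacAux.L N := rfl
  rw [hLdef]
  have hs1 : 1 < Real.sqrt N := LacAux.one_lt_s hN
  have hLpos : 0 < LacAux.L N := LacAux.L_pos hN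
  apply csSup_eq_of_forall_le_of_forall_lt_exists_gt
  · -- nonempty
    obtain ⟨x, hsx, hxne, -, -⟩ := LacAux.lower hN 1 le_rfl
    exact ⟨_, ⟨x, hsx, hxne, rfl⟩⟩
  · -- upper bound
    rintro r ⟨x, hsx, hxne, rfl⟩
    obtain ⟨hsummF, hQle⟩ := LacAux.Q_bound hN x hsx
    have hPpos : 0 < ∑' n, x n ^ 2 := by
      obtain ⟨n, hn⟩ := Function.ne_iff.mp hxne
      have hxn : (0:ℝ) < x n ^ 2 :=
        lt_of_le_of_ne (sq_nonneg _) (Ne.symm (pow_ne_zero 2 hn))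
      exact lt_of_lt_of_le hxn (Summable.le_tsum hsx n fun j _ => sq_nonneg _)
    rw [div_le_iff₀ (Real.sqrt_pos.mpr hPpos)]
    have h1 : Real.sqrt (∑' n, (lacC N x n) ^ 2)
        ≤ Real.sqrt (LacAux.L N ^ 2 * ∑' n, x n ^ 2) := Real.sqrt_le_sqrt hQle
    rwa [Real.sqrt_mul (sq_nonneg _), Real.sqrt_sq (le_of_lt hLpos)] at h1
  · -- approach from below
    intro w hw
    set w' := max w 0 with hw'def
    have hw'0 : 0 ≤ w' := le_max_right _ _
    have hw'L : w' < LacAux.L N := max_lt hw hLpos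
    have hww' : w ≤ w' := le_max_left _ _
    have hε : 0 < LacAux.L N ^ 2 - w' ^ 2 := by nlinarith
    set D := 2 * LacAux.L N ^ 2 / (Real.sqrt N - 1) with hDdef
    have hD0 : 0 < D := by
      rw [hDdef]
      apply div_pos (by positivity) (by linarith)
    obtain ⟨m, hm⟩ := exists_nat_gt (max (D / (LacAux.L N ^ 2 - w' ^ 2)) 1)
    have hm1 : 1 ≤ m := by
      have h1m : (1:ℝ) < m := lt_of_le_of_lt (le_max_right _ _) hm
      exact_mod_cast h1m.le
    have hmD : D < (m:ℝ) * (LacAux.L N ^ 2 - w' ^ 2) := by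
      have := lt_of_le_of_lt (le_max_left (D / (LacAux.L N ^ 2 - w' ^ 2)) 1) hm
      calc D = D / (LacAux.L N ^ 2 - w' ^ 2) * (LacAux.L N ^ 2 - w' ^ 2) := by
            field_simp
        _ < (m:ℝ) * (LacAux.L N ^ 2 - w' ^ 2) := by
            apply mul_lt_mul_of_pos_right this hε
    obtain ⟨x, hsx, hxne, hP, hQge⟩ := LacAux.lower hN m hm1
    refine ⟨_, ⟨x, hsx, hxne, rfl⟩, ?_⟩
    have hQgt : w' ^ 2 * m < ∑' n, (lacC N x n) ^ 2 := by nlinarith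
    have hmpos : (0:ℝ) < m := by exact_mod_cast hm1
    have hsm : 0 < Real.sqrt m := Real.sqrt_pos.mpr hmpos
    have hgoal : w' < Real.sqrt (∑' n, (lacC N x n) ^ 2) / Real.sqrt (∑' n, x n ^ 2) := by
      rw [hP, lt_div_iff₀ hsm]
      have hws : w' * Real.sqrt m = Real.sqrt (w' ^ 2 * m) := by
        rw [Real.sqrt_mul (sq_nonneg _), Real.sqrt_sq hw'0]
      rw [hws]
      exact Real.sqrt_lt_sqrt (by positivity) hQgt
    linarith
end

section
/- Let N ≥ 2 be a fixed integer and let C be the lacunary C-matrix associated with N. For every square-summable sequence x = (x_n)_{n≥0} of real numbers, ‖Cx‖₂² ≤ ((N−1)/(√N − 1)²)‖x‖₂², i.e. Σ_{j=1}^∞ N^{−j} (Σ_{k=0}^{N^j} x_k)² ≤ ((N−1)/(√N − 1)²) Σ_{n=0}^∞ x_n². -/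
open Finset

/-- block sums -/
private noncomputable def lacB (N : ℕ) (x : ℕ → ℝ) (i : ℕ) : ℝ :=
  if i = 0 then ∑ k ∈ Finset.range (N + 1), x k
  else ∑ k ∈ Finset.Ioc (N ^ i) (N ^ (i + 1)), x k

/-- Cauchy–Schwarz weights -/
private noncomputable def lacU (c : ℝ) (i : ℕ) : ℝ := if i = 0 then c / (c - 1) else c ^ i

private lemma lacC_geom_tail {c : ℝ} (hc : 1 < c) (i J : ℕ) :
    ∑ j ∈ Finset.Ico i J, (c ^ (j + 1))⁻¹ ≤ (c ^ i)⁻¹ * (c - 1)⁻¹ := by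
  have hc0 : (0:ℝ) < c := lt_trans one_pos hc
  have hc1 : (0:ℝ) < c - 1 := by linarith
  rw [Finset.sum_Ico_eq_sum_range]
  induction J - i generalizing i with
  | zero => simp; positivity
  | succ n ih =>
      rw [Finset.sum_range_succ']
      have h1 : ∀ j : ℕ, (c ^ (i + (j + 1) + 1))⁻¹ = (c ^ ((i+1) + j + 1))⁻¹ := by
        intro j; ring_nf
      simp_rw [h1]
      have h2 := ih (i + 1)
      have h3 : (c ^ i)⁻¹ * (c - 1)⁻¹ =
          (c ^ (i + 1))⁻¹ * (c - 1)⁻¹ + (c ^ (i + 0 + 1))⁻¹ := by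
        field_simp
        ring
      rw [h3]
      gcongr

private lemma lacC_blocks (N : ℕ) (hN : 2 ≤ N) (y : ℕ → ℝ) (j : ℕ) :
    ∑ k ∈ Finset.range (N ^ (j + 1) + 1), y k
      = ∑ i ∈ Finset.range (j + 1), lacB N y i := by
  unfold lacB
  induction j with
  | zero => simp
  | succ j ih =>
      conv_rhs => rw [Finset.sum_range_succ]
      rw [← ih, if_neg (Nat.succ_ne_zero j)]
      have hle : N ^ (j + 1) + 1 ≤ N ^ (j + 1 + 1) + 1 := by
        have := Nat.pow_le_pow_right (show 1 ≤ N by omega) (show j + 1 ≤ j + 1 + 1 by omega)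
        omega
      rw [Finset.range_eq_Ico,
        ← Finset.sum_Ico_consecutive y (Nat.zero_le (N ^ (j + 1) + 1)) hle,
        Finset.Ico_add_one_add_one_eq_Ioc, ← Finset.range_eq_Ico]

private lemma lacC_sum_u {c : ℝ} (hc : 1 < c) (j : ℕ) :
    ∑ i ∈ Finset.range (j + 1), lacU c i = c ^ (j + 1) / (c - 1) := by
  have hc1 : c - 1 ≠ 0 := sub_ne_zero.mpr (ne_of_gt hc)
  unfold lacU
  induction j with
  | zero => simp
  | succ j ih =>
      rw [Finset.sum_range_succ, ih, if_neg (Nat.succ_ne_zero j)]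
      field_simp
      ring

private lemma lacC_u_pos {c : ℝ} (hc : 1 < c) (i : ℕ) : 0 < lacU c i := by
  have hc0 : (0:ℝ) < c := lt_trans one_pos hc
  unfold lacU
  split
  · have : (0:ℝ) < c - 1 := by linarith
    positivity
  · positivity

private lemma lacC_block_bound (N : ℕ) (hN : 2 ≤ N) (x : ℕ → ℝ) {c : ℝ}
    (hc : 1 < c) (hc2 : c ^ 2 = (N : ℝ)) (i : ℕ) :
    (c ^ i)⁻¹ * ((lacB N x i) ^ 2 / lacU c i)
      ≤ (c ^ 2 - 1) * lacB N (fun k => x k ^ 2) i := by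
  have hc0 : (0:ℝ) < c := lt_trans one_pos hc
  have hcm : (0:ℝ) < c - 1 := by linarith
  cases i with
  | zero =>
      simp only [lacB, lacU, reduceIte, pow_zero, inv_one, one_mul]
      have key := sq_sum_le_card_mul_sum_sq (s := Finset.range (N + 1)) (f := x)
      rw [Finset.card_range] at key
      have hcast : ((N + 1 : ℕ) : ℝ) = c ^ 2 + 1 := by push_cast; rw [hc2]
      rw [hcast] at key
      have hQ : (0:ℝ) ≤ ∑ k ∈ Finset.range (N + 1), x k ^ 2 :=
        Finset.sum_nonneg fun k _ => sq_nonneg _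
      rw [div_div_eq_mul_div, div_le_iff₀ hc0]
      nlinarith [mul_nonneg hQ (sq_nonneg (c - 1)),
        mul_le_mul_of_nonneg_right key (le_of_lt hcm)]
  | succ i =>
      simp only [lacB, lacU, reduceIte, Nat.succ_ne_zero]
      have key := sq_sum_le_card_mul_sum_sq
        (s := Finset.Ioc (N ^ (i + 1)) (N ^ (i + 1 + 1))) (f := x)
      rw [Nat.card_Ioc] at key
      have hle : N ^ (i + 1) ≤ N ^ (i + 1 + 1) :=
        Nat.pow_le_pow_right (by omega) (by omega)
      have hcast : ((N ^ (i + 1 + 1) - N ^ (i + 1) : ℕ) : ℝ)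
          = (N:ℝ) ^ (i + 1 + 1) - (N:ℝ) ^ (i + 1) := by
        rw [Nat.cast_sub hle]; push_cast; ring
      rw [hcast] at key
      have hpow : (0:ℝ) < (N:ℝ) ^ (i + 1) := by positivity
      have hEq : (c ^ (i+1))⁻¹ * ((∑ k ∈ Finset.Ioc (N ^ (i+1)) (N ^ (i+1+1)), x k) ^ 2 / c ^ (i+1))
          = (∑ k ∈ Finset.Ioc (N ^ (i+1)) (N ^ (i+1+1)), x k) ^ 2 / (N:ℝ) ^ (i+1) := by
        have h2 : (N:ℝ) ^ (i+1) = c ^ (i+1) * c ^ (i+1) := by rw [← hc2]; ring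
        rw [h2]
        field_simp
      rw [hEq, div_le_iff₀ hpow]
      have h3 : (c ^ 2 - 1) * (∑ k ∈ Finset.Ioc (N ^ (i+1)) (N ^ (i+1+1)), x k ^ 2) * (N:ℝ) ^ (i+1)
          = ((N:ℝ) ^ (i+1+1) - (N:ℝ) ^ (i+1)) * ∑ k ∈ Finset.Ioc (N ^ (i+1)) (N ^ (i+1+1)), x k ^ 2 := by
        rw [hc2]; ring
      rw [h3]
      exact key

/-- For `N ≥ 2` and every square-summable real sequence `x`,
`‖Cx‖₂² ≤ ((N−1)/(√N − 1)²)‖x‖₂²`, where `C` is the lacunary `C`-matrix, i.e.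
`∑_{j=1}^∞ N^{−j} (∑_{k=0}^{N^j} x_k)² ≤ ((N−1)/(√N − 1)²) ∑ₙ x_n²`. -/
theorem lacC_norm_le (N : ℕ) (hN : 2 ≤ N)
    (x : ℕ → ℝ) (hx : Summable fun n => (x n) ^ 2) :
    ∑' j : ℕ, ((N : ℝ) ^ (j + 1))⁻¹ * (∑ k ∈ Finset.range (N ^ (j + 1) + 1), x k) ^ 2 ≤
      ((N : ℝ) - 1) / (Real.sqrt (N : ℝ) - 1) ^ 2 * ∑' n : ℕ, (x n) ^ 2 := by
  have hN2 : (2:ℝ) ≤ (N:ℝ) := by exact_mod_cast hN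
  set c := Real.sqrt (N:ℝ) with hcdef
  have hc2 : c ^ 2 = (N:ℝ) := Real.sq_sqrt (by positivity)
  have hc : 1 < c := by nlinarith [Real.sqrt_nonneg (N:ℝ)]
  have hc0 : (0:ℝ) < c := lt_trans one_pos hc
  have hcm : (0:ℝ) < c - 1 := by linarith
  have htsum_nonneg : (0:ℝ) ≤ ∑' n, x n ^ 2 := tsum_nonneg fun n => sq_nonneg _
  have hqsum : ∀ J : ℕ, ∑ i ∈ Finset.range J, lacB N (fun k => x k ^ 2) i ≤ ∑' n, x n ^ 2 := by
    intro J
    cases J with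
    | zero => simpa using htsum_nonneg
    | succ j =>
        rw [← lacC_blocks N hN (fun k => x k ^ 2) j]
        exact Summable.sum_le_tsum _ (fun k _ => sq_nonneg _) hx
  have hCS : ∀ j : ℕ, (∑ k ∈ Finset.range (N ^ (j+1) + 1), x k) ^ 2
      ≤ c ^ (j+1) / (c - 1) * ∑ i ∈ Finset.range (j+1), (lacB N x i) ^ 2 / lacU c i := by
    intro j
    have h1 := sq_sum_div_le_sum_sq_div (Finset.range (j+1)) (lacB N x)
      (g := lacU c) (fun i _ => lacC_u_pos hc i)
    rw [lacC_sum_u hc j] at h1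
    rw [lacC_blocks N hN x j]
    have hpos : (0:ℝ) < c ^ (j+1) / (c-1) := by positivity
    calc (∑ i ∈ Finset.range (j+1), lacB N x i) ^ 2
        = ((∑ i ∈ Finset.range (j+1), lacB N x i) ^ 2 / (c ^ (j+1)/(c-1))) * (c ^ (j+1)/(c-1)) := by
          field_simp
      _ ≤ (∑ i ∈ Finset.range (j+1), (lacB N x i) ^ 2 / lacU c i) * (c ^ (j+1)/(c-1)) :=
          mul_le_mul_of_nonneg_right h1 hpos.le
      _ = c ^ (j+1)/(c-1) * ∑ i ∈ Finset.range (j+1), (lacB N x i) ^ 2 / lacU c i := mul_comm _ _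
  have hvnn : ∀ i, (0:ℝ) ≤ (lacB N x i) ^ 2 / lacU c i :=
    fun i => div_nonneg (sq_nonneg _) (lacC_u_pos hc i).le
  refine Real.tsum_le_of_sum_range_le (fun j => by positivity) (fun J => ?_)
  have key : ∀ j : ℕ, ((N:ℝ) ^ (j+1))⁻¹ * (c ^ (j+1) / (c-1)) = (c-1)⁻¹ * (c ^ (j+1))⁻¹ := by
    intro j
    have h2 : (N:ℝ) ^ (j+1) = c ^ (j+1) * c ^ (j+1) := by rw [← hc2]; ring
    have h3 : c ^ (j+1) ≠ 0 := by positivity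
    rw [h2]
    field_simp
  calc ∑ j ∈ Finset.range J, ((N:ℝ) ^ (j + 1))⁻¹ * (∑ k ∈ Finset.range (N ^ (j + 1) + 1), x k) ^ 2
      ≤ ∑ j ∈ Finset.range J, ((N:ℝ) ^ (j + 1))⁻¹ *
          (c ^ (j+1) / (c - 1) * ∑ i ∈ Finset.range (j+1), (lacB N x i) ^ 2 / lacU c i) := by
        refine Finset.sum_le_sum fun j _ => ?_
        exact mul_le_mul_of_nonneg_left (hCS j) (by positivity)
    _ = ∑ j ∈ Finset.range J, ∑ i ∈ Finset.range (j+1),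
          (c-1)⁻¹ * ((c ^ (j+1))⁻¹ * ((lacB N x i) ^ 2 / lacU c i)) := by
        refine Finset.sum_congr rfl fun j _ => ?_
        rw [← mul_assoc, key j, Finset.mul_sum]
        exact Finset.sum_congr rfl fun i _ => by ring
    _ = ∑ i ∈ Finset.range J, ∑ j ∈ Finset.Ico i J,
          (c-1)⁻¹ * ((c ^ (j+1))⁻¹ * ((lacB N x i) ^ 2 / lacU c i)) := by
        simp_rw [Finset.range_eq_Ico]
        exact (Finset.sum_Ico_Ico_comm 0 J _).symm
    _ ≤ ∑ i ∈ Finset.range J, (c-1)⁻¹ *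
          (((c ^ i)⁻¹ * (c-1)⁻¹) * ((lacB N x i) ^ 2 / lacU c i)) := by
        refine Finset.sum_le_sum fun i _ => ?_
        rw [← Finset.mul_sum]
        refine mul_le_mul_of_nonneg_left ?_ (by positivity)
        rw [← Finset.sum_mul]
        exact mul_le_mul_of_nonneg_right (lacC_geom_tail hc i J) (hvnn i)
    _ ≤ ∑ i ∈ Finset.range J, (c-1)⁻¹ *
          ((c-1)⁻¹ * ((c ^ 2 - 1) * lacB N (fun k => x k ^ 2) i)) := by
        refine Finset.sum_le_sum fun i _ => ?_
        refine mul_le_mul_of_nonneg_left ?_ (by positivity)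
        rw [show ((c ^ i)⁻¹ * (c-1)⁻¹) * ((lacB N x i) ^ 2 / lacU c i)
            = (c-1)⁻¹ * ((c ^ i)⁻¹ * ((lacB N x i) ^ 2 / lacU c i)) from by ring]
        exact mul_le_mul_of_nonneg_left (lacC_block_bound N hN x hc hc2 i) (by positivity)
    _ = (c ^ 2 - 1)/(c-1) ^ 2 * ∑ i ∈ Finset.range J, lacB N (fun k => x k ^ 2) i := by
        rw [Finset.mul_sum]
        refine Finset.sum_congr rfl fun i _ => ?_
        have hne : c - 1 ≠ 0 := ne_of_gt hcm
        field_simp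
    _ ≤ (c ^ 2 - 1)/(c-1) ^ 2 * ∑' n, x n ^ 2 := by
        have hpos : (0:ℝ) < c ^ 2 - 1 := by nlinarith
        exact mul_le_mul_of_nonneg_left (hqsum J) (by positivity)
    _ = ((N:ℝ) - 1)/(c - 1) ^ 2 * ∑' n, x n ^ 2 := by rw [hc2]
end
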